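/- arXiv:1310.7313 — 4 statements merged into one kernel-verified Lean document; each statement's English description precedes it below -/
import Mathlib

section
/- There exists a graph G that is not an odd-cycle graph (i.e., G contains an even cycle) together with a skew-adjacency matrix S of G such that p_S(x) = (−i)^n m(G, ix), where n is the number of vertices of G. In particular, the graph formed by two 4-cycles sharing one vertex, with one cycle oriented positively and the other negatively, is such an example. -/
open Polynomial Matrix

variable {V : Type*} [Fintype V] [DecidableEq V]

/-- `S` is a skew-adjacency matrix of the simple graph `G`. -/
def IsSkewAdj (G : SimpleGraph V) (S : Matrix V V ℝ) : Prop :=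
  (∀ i j, S j i = - S i j) ∧
  (∀ i j, G.Adj i j → S i j = 1 ∨ S i j = -1) ∧
  (∀ i j, ¬ G.Adj i j → S i j = 0)

/-- Spectral radius of a complex square matrix. -/
noncomputable def specRad (M : Matrix V V ℂ) : ℝ :=
  sSup {r : ℝ | ∃ z : ℂ, M.charpoly.IsRoot z ∧ r = ‖z‖}

/-- The number of matchings of `G` covering exactly `k` vertices. -/
noncomputable def matchCount (G : SimpleGraph V) (k : ℕ) : ℕ :=
  {M : G.Subgraph | M.IsMatching ∧ M.verts.ncard = k}.ncard

/-- The matching polynomial of `G`, as a polynomial over `ℂ`. -/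
noncomputable def matchingPoly (G : SimpleGraph V) : Polynomial ℂ :=
  ∑ k ∈ Finset.range (Fintype.card V + 1),
    Polynomial.C ((-1 : ℂ) ^ (k / 2) * (matchCount G k : ℂ)) *
      Polynomial.X ^ (Fintype.card V - k)

/-- The maximum skew spectral radius of `G`. -/
noncomputable def maxSkewSpecRad (G : SimpleGraph V) : ℝ :=
  sSup {r : ℝ | ∃ S : Matrix V V ℝ, IsSkewAdj G S ∧ r = specRad (S.map Complex.ofReal)}

/-- `G` contains an even cycle. -/
def HasEvenCycle (G : SimpleGraph V) : Prop :=
  ∃ (v : V) (w : G.Walk v v), w.IsCycle ∧ Even w.length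


set_option linter.unusedSectionVars false
set_option maxHeartbeats 3200000

namespace SkewAux

/-- The pattern matrix of the example. -/
def A : Matrix (Fin 5) (Fin 5) ℤ :=
  !![0,1,1,1,1; -1,0,1,0,1; -1,-1,0,1,0; -1,0,-1,0,0; -1,-1,0,0,0]

/-- The example graph. -/
def Gex : SimpleGraph (Fin 5) where
  Adj i j := A i j ≠ 0
  symm := by constructor; intro a b; fin_cases a <;> fin_cases b <;> simp [A]
  loopless := by constructor; intro a; fin_cases a <;> simp [A]

instance : DecidableRel Gex.Adj := fun i j => decidable_of_iff (A i j ≠ 0) Iff.rfl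

/-- The skew-adjacency matrix of the example. -/
noncomputable def Sex : Matrix (Fin 5) (Fin 5) ℝ := fun i j => (A i j : ℝ)
def e01 : Gex.Subgraph := Gex.subgraphOfAdj (show Gex.Adj 0 1 by decide)
def e02 : Gex.Subgraph := Gex.subgraphOfAdj (show Gex.Adj 0 2 by decide)
def e03 : Gex.Subgraph := Gex.subgraphOfAdj (show Gex.Adj 0 3 by decide)
def e04 : Gex.Subgraph := Gex.subgraphOfAdj (show Gex.Adj 0 4 by decide)
def e12 : Gex.Subgraph := Gex.subgraphOfAdj (show Gex.Adj 1 2 by decide)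
def e14 : Gex.Subgraph := Gex.subgraphOfAdj (show Gex.Adj 1 4 by decide)
def e23 : Gex.Subgraph := Gex.subgraphOfAdj (show Gex.Adj 2 3 by decide)

def f1423 : Gex.Subgraph := e14 ⊔ e23
def f0423 : Gex.Subgraph := e04 ⊔ e23
def f0314 : Gex.Subgraph := e03 ⊔ e14
def f0214 : Gex.Subgraph := e02 ⊔ e14
def f0412 : Gex.Subgraph := e04 ⊔ e12
def f0123 : Gex.Subgraph := e01 ⊔ e23
def f0312 : Gex.Subgraph := e03 ⊔ e12

lemma adj_ne {G : SimpleGraph (Fin 5)} {M N : G.Subgraph} (i j : Fin 5)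
    (h1 : M.Adj i j) (h2 : ¬ N.Adj i j) : M ≠ N := fun h => h2 (h ▸ h1)

lemma disj_pair {a b c d : Fin 5} (h1 : a ≠ c) (h2 : a ≠ d) (h3 : b ≠ c) (h4 : b ≠ d) :
    Disjoint ({a,b} : Set (Fin 5)) {c,d} := by
  rw [Set.disjoint_left]
  intro x hx hy
  simp only [Set.mem_insert_iff, Set.mem_singleton_iff] at hx hy
  rcases hx with rfl|rfl <;> rcases hy with rfl|rfl <;> simp_all

lemma ncard4' {a b c d : Fin 5} (h1 : a ≠ b) (h2 : a ≠ c) (h3 : a ≠ d) (h4 : b ≠ c)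
    (h5 : b ≠ d) (h6 : c ≠ d) : ({a,b,c,d} : Set (Fin 5)).ncard = 4 := by
  rw [Set.ncard_insert_of_notMem (by simp [h1, h2, h3]) (Set.toFinite _),
      Set.ncard_insert_of_notMem (by simp [h4, h5]) (Set.toFinite _),
      Set.ncard_pair h6]

lemma partner {V : Type*} {G : SimpleGraph V} {M : G.Subgraph} (hM : M.IsMatching) {v : V}
    (hv : v ∈ M.verts) :
    ∃ w, M.Adj v w ∧ w ∈ M.verts ∧ w ≠ v ∧ ∀ y, M.Adj v y → y = w := by
  obtain ⟨w, hw, hu⟩ := hM hv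
  exact ⟨w, hw, M.edge_vert hw.symm, (M.adj_sub hw).ne', hu⟩

lemma matching_two {V : Type*} {G : SimpleGraph V} {M : G.Subgraph} (hM : M.IsMatching)
    {a b : V} (hv : M.verts = {a, b}) (hab : M.Adj a b) :
    M = G.subgraphOfAdj (M.adj_sub hab) := by
  have hbv : b ∈ M.verts := M.edge_vert hab.symm
  have hav : a ∈ M.verts := M.edge_vert hab
  ext x y
  · simp [hv]
  · simp only [SimpleGraph.subgraphOfAdj_adj]
    constructor
    · intro hxy
      have hx : x ∈ M.verts := M.edge_vert hxy
      rw [hv] at hx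
      rcases hx with rfl | rfl
      · have := (hM hav).unique hxy hab
        subst this; rfl
      · have := (hM hbv).unique hxy hab.symm
        subst this; exact Sym2.eq_swap
    · intro h
      rw [Sym2.eq_iff] at h
      rcases h with ⟨rfl, rfl⟩ | ⟨rfl, rfl⟩
      · exact hab
      · exact hab.symm

lemma matching_four {V : Type*} {G : SimpleGraph V} {M : G.Subgraph} (hM : M.IsMatching)
    {a b c d : V} (hv : M.verts = {a, b, c, d}) (hab : M.Adj a b) (hcd : M.Adj c d) :
    M = G.subgraphOfAdj (M.adj_sub hab) ⊔ G.subgraphOfAdj (M.adj_sub hcd) := by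
  have hav : a ∈ M.verts := M.edge_vert hab
  have hbv : b ∈ M.verts := M.edge_vert hab.symm
  have hcv : c ∈ M.verts := M.edge_vert hcd
  have hdv : d ∈ M.verts := M.edge_vert hcd.symm
  ext x y
  · rw [hv]
    simp only [SimpleGraph.Subgraph.verts_sup, SimpleGraph.subgraphOfAdj_verts,
      Set.mem_insert_iff, Set.mem_singleton_iff, Set.mem_union]
    tauto
  · simp only [SimpleGraph.Subgraph.sup_adj, SimpleGraph.subgraphOfAdj_adj]
    constructor
    · intro hxy
      have hx : x ∈ M.verts := M.edge_vert hxy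
      rw [hv] at hx
      rcases hx with rfl | rfl | rfl | rfl
      · left; have := (hM hav).unique hxy hab; subst this; rfl
      · left; have := (hM hbv).unique hxy hab.symm; subst this; exact Sym2.eq_swap
      · right; have := (hM hcv).unique hxy hcd; subst this; rfl
      · right; have := (hM hdv).unique hxy hcd.symm; subst this; exact Sym2.eq_swap
    · rintro (h | h) <;> rw [Sym2.eq_iff] at h <;>
        rcases h with ⟨rfl, rfl⟩ | ⟨rfl, rfl⟩
      · exact hab
      · exact hab.symm
      · exact hcd
      · exact hcd.symm

lemma matching_four_classify {G : SimpleGraph (Fin 5)} {M : G.Subgraph} (hM : M.IsMatching)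
    {a b c d : Fin 5} (nab : a ≠ b) (nac : a ≠ c) (nad : a ≠ d) (nbc : b ≠ c) (nbd : b ≠ d)
    (ncd : c ≠ d) (hv : M.verts = {a, b, c, d}) :
    (M.Adj a b ∧ M.Adj c d) ∨ (M.Adj a c ∧ M.Adj b d) ∨ (M.Adj a d ∧ M.Adj b c) := by
  have hav : a ∈ M.verts := by rw [hv]; exact Set.mem_insert _ _
  obtain ⟨w, hw, hwv, hwa, hwu⟩ := partner hM hav
  rw [hv] at hwv
  simp only [Set.mem_insert_iff, Set.mem_singleton_iff] at hwv
  rcases hwv with rfl | rfl | rfl | rfl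
  · exact absurd rfl hwa
  · -- w = b
    left
    refine ⟨hw, ?_⟩
    have hcv : c ∈ M.verts := by rw [hv]; simp
    obtain ⟨u, hu, huv, huc, huu⟩ := partner hM hcv
    rw [hv] at huv
    simp only [Set.mem_insert_iff, Set.mem_singleton_iff] at huv
    rcases huv with rfl | rfl | rfl | rfl
    · exact absurd (hwu _ hu.symm) nbc.symm
    · exact absurd ((hM (M.edge_vert hw.symm)).unique hu.symm hw.symm) nac.symm
    · exact absurd rfl huc
    · exact hu
  · -- w = c
    right; left
    refine ⟨hw, ?_⟩
    have hbv : b ∈ M.verts := by rw [hv]; simp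
    obtain ⟨u, hu, huv, hub, huu⟩ := partner hM hbv
    rw [hv] at huv
    simp only [Set.mem_insert_iff, Set.mem_singleton_iff] at huv
    rcases huv with rfl | rfl | rfl | rfl
    · exact absurd (hwu _ hu.symm) nbc
    · exact absurd rfl hub
    · exact absurd ((hM (M.edge_vert hw.symm)).unique hu.symm hw.symm) nab.symm
    · exact hu
  · -- w = d
    right; right
    refine ⟨hw, ?_⟩
    have hbv : b ∈ M.verts := by rw [hv]; simp
    obtain ⟨u, hu, huv, hub, huu⟩ := partner hM hbv
    rw [hv] at huv
    simp only [Set.mem_insert_iff, Set.mem_singleton_iff] at huv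
    rcases huv with rfl | rfl | rfl | rfl
    · exact absurd (hwu _ hu.symm) nbd
    · exact absurd rfl hub
    · exact hu
    · exact absurd ((hM (M.edge_vert hw.symm)).unique hu.symm hw.symm) nab.symm

lemma sOA_comm {G : SimpleGraph (Fin 5)} {x y : Fin 5} (g : G.Adj x y) :
    G.subgraphOfAdj g = G.subgraphOfAdj g.symm := by
  have h := G.subgraphOfAdj_symm g.symm
  exact h

lemma edge_mem : ∀ (a b : Fin 5) (g : Gex.Adj a b),
    Gex.subgraphOfAdj g = e01 ∨ Gex.subgraphOfAdj g = e02 ∨ Gex.subgraphOfAdj g = e03 ∨ Gex.subgraphOfAdj g = e04 ∨ Gex.subgraphOfAdj g = e12 ∨ Gex.subgraphOfAdj g = e14 ∨ Gex.subgraphOfAdj g = e23 := by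
  intro a b g
  fin_cases a <;> fin_cases b <;>
    first
      | exact absurd g (by decide)
      | exact Or.inl (rfl)
      | exact Or.inl (sOA_comm g)
      | exact Or.inr (Or.inl (rfl))
      | exact Or.inr (Or.inl (sOA_comm g))
      | exact Or.inr (Or.inr (Or.inl (rfl)))
      | exact Or.inr (Or.inr (Or.inl (sOA_comm g)))
      | exact Or.inr (Or.inr (Or.inr (Or.inl (rfl))))
      | exact Or.inr (Or.inr (Or.inr (Or.inl (sOA_comm g))))
      | exact Or.inr (Or.inr (Or.inr (Or.inr (Or.inl (rfl)))))
      | exact Or.inr (Or.inr (Or.inr (Or.inr (Or.inl (sOA_comm g)))))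
      | exact Or.inr (Or.inr (Or.inr (Or.inr (Or.inr (Or.inl (rfl))))))
      | exact Or.inr (Or.inr (Or.inr (Or.inr (Or.inr (Or.inl (sOA_comm g))))))
      | exact Or.inr (Or.inr (Or.inr (Or.inr (Or.inr (Or.inr (rfl))))))
      | exact Or.inr (Or.inr (Or.inr (Or.inr (Or.inr (Or.inr (sOA_comm g))))))


lemma mc2 : {M : Gex.Subgraph | M.IsMatching ∧ M.verts.ncard = 2}.ncard = 7 := by
  have hset : {M : Gex.Subgraph | M.IsMatching ∧ M.verts.ncard = 2} =
      {e01, e02, e03, e04, e12, e14, e23} := by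
    ext M
    simp only [Set.mem_setOf_eq, Set.mem_insert_iff, Set.mem_singleton_iff]
    constructor
    · rintro ⟨hM, hc⟩
      obtain ⟨a, b, hab, hv⟩ := Set.ncard_eq_two.mp hc
      have hav : a ∈ M.verts := by rw [hv]; exact Set.mem_insert _ _
      obtain ⟨w, hw, hwv, hwa, -⟩ := partner hM hav
      rw [hv] at hwv
      simp only [Set.mem_insert_iff, Set.mem_singleton_iff] at hwv
      rcases hwv with rfl | rfl
      · exact absurd rfl hwa
      · rw [matching_two hM hv hw]
        exact edge_mem a w (M.adj_sub hw)
    · rintro (rfl | rfl | rfl | rfl | rfl | rfl | rfl) <;>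
        refine ⟨SimpleGraph.Subgraph.IsMatching.subgraphOfAdj _, ?_⟩ <;>
        simp only [e01, e02, e03, e04, e12, e14, e23, SimpleGraph.subgraphOfAdj_verts] <;>
        exact Set.ncard_pair (by decide)
  rw [hset]
  have d0 : e01 ∉ ({e02, e03, e04, e12, e14, e23} : Set Gex.Subgraph) := by
    simp only [Set.mem_insert_iff, Set.mem_singleton_iff]
    push_neg
    exact ⟨adj_ne 0 1 (by simp [e01]) (by simp [e02]), adj_ne 0 1 (by simp [e01]) (by simp [e03]), adj_ne 0 1 (by simp [e01]) (by simp [e04]), adj_ne 0 1 (by simp [e01]) (by simp [e12]), adj_ne 0 1 (by simp [e01]) (by simp [e14]), adj_ne 0 1 (by simp [e01]) (by simp [e23])⟩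
  have d1 : e02 ∉ ({e03, e04, e12, e14, e23} : Set Gex.Subgraph) := by
    simp only [Set.mem_insert_iff, Set.mem_singleton_iff]
    push_neg
    exact ⟨adj_ne 0 2 (by simp [e02]) (by simp [e03]), adj_ne 0 2 (by simp [e02]) (by simp [e04]), adj_ne 0 2 (by simp [e02]) (by simp [e12]), adj_ne 0 2 (by simp [e02]) (by simp [e14]), adj_ne 0 2 (by simp [e02]) (by simp [e23])⟩
  have d2 : e03 ∉ ({e04, e12, e14, e23} : Set Gex.Subgraph) := by
    simp only [Set.mem_insert_iff, Set.mem_singleton_iff]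
    push_neg
    exact ⟨adj_ne 0 3 (by simp [e03]) (by simp [e04]), adj_ne 0 3 (by simp [e03]) (by simp [e12]), adj_ne 0 3 (by simp [e03]) (by simp [e14]), adj_ne 0 3 (by simp [e03]) (by simp [e23])⟩
  have d3 : e04 ∉ ({e12, e14, e23} : Set Gex.Subgraph) := by
    simp only [Set.mem_insert_iff, Set.mem_singleton_iff]
    push_neg
    exact ⟨adj_ne 0 4 (by simp [e04]) (by simp [e12]), adj_ne 0 4 (by simp [e04]) (by simp [e14]), adj_ne 0 4 (by simp [e04]) (by simp [e23])⟩
  have d4 : e12 ∉ ({e14, e23} : Set Gex.Subgraph) := by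
    simp only [Set.mem_insert_iff, Set.mem_singleton_iff]
    push_neg
    exact ⟨adj_ne 1 2 (by simp [e12]) (by simp [e14]), adj_ne 1 2 (by simp [e12]) (by simp [e23])⟩
  have d5 : e14 ∉ ({e23} : Set Gex.Subgraph) := by
    simp only [Set.mem_insert_iff, Set.mem_singleton_iff]
    push_neg
    exact adj_ne 1 4 (by simp [e14]) (by simp [e23])
  rw [Set.ncard_insert_of_notMem d0 (Set.toFinite _), Set.ncard_insert_of_notMem d1 (Set.toFinite _), Set.ncard_insert_of_notMem d2 (Set.toFinite _), Set.ncard_insert_of_notMem d3 (Set.toFinite _), Set.ncard_insert_of_notMem d4 (Set.toFinite _), Set.ncard_insert_of_notMem d5 (Set.toFinite _), Set.ncard_singleton]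


lemma mc4 : {M : Gex.Subgraph | M.IsMatching ∧ M.verts.ncard = 4}.ncard = 7 := by
  have hset : {M : Gex.Subgraph | M.IsMatching ∧ M.verts.ncard = 4} =
      {f1423, f0423, f0314, f0214, f0412, f0123, f0312} := by
    ext M
    simp only [Set.mem_setOf_eq, Set.mem_insert_iff, Set.mem_singleton_iff]
    constructor
    · rintro ⟨hM, hc⟩
      have htot := Set.ncard_add_ncard_compl M.verts
      rw [hc] at htot
      simp only [Set.ncard_univ, Nat.card_eq_fintype_card, Fintype.card_fin] at htot
      have h1 : M.vertsᶜ.ncard = 1 := by omega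
      obtain ⟨x, hx⟩ := Set.ncard_eq_one.mp h1
      have hvc : M.verts = {x}ᶜ := by rw [← hx, compl_compl]
      fin_cases x
      · -- verts = complement of 0
        have hv : M.verts = ({1,2,3,4} : Set (Fin 5)) := by
          rw [hvc]; ext y; fin_cases y <;> simp
        rcases matching_four_classify hM (by decide) (by decide) (by decide) (by decide) (by decide) (by decide) hv with ⟨h1, h2⟩ | ⟨h1, h2⟩ | ⟨h1, h2⟩
        · exact absurd (M.adj_sub h2) (by decide)
        · exact absurd (M.adj_sub h1) (by decide)
        · have hv2 : M.verts = ({1,4,2,3} : Set (Fin 5)) := by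
            ext y; fin_cases y <;> simp [hv]
          rw [matching_four hM hv2 h1 h2]
          exact Or.inl (rfl)
      · -- verts = complement of 1
        have hv : M.verts = ({0,2,3,4} : Set (Fin 5)) := by
          rw [hvc]; ext y; fin_cases y <;> simp
        rcases matching_four_classify hM (by decide) (by decide) (by decide) (by decide) (by decide) (by decide) hv with ⟨h1, h2⟩ | ⟨h1, h2⟩ | ⟨h1, h2⟩
        · exact absurd (M.adj_sub h2) (by decide)
        · exact absurd (M.adj_sub h2) (by decide)
        · have hv2 : M.verts = ({0,4,2,3} : Set (Fin 5)) := by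
            ext y; fin_cases y <;> simp [hv]
          rw [matching_four hM hv2 h1 h2]
          exact Or.inr (Or.inl (rfl))
      · -- verts = complement of 2
        have hv : M.verts = ({0,1,3,4} : Set (Fin 5)) := by
          rw [hvc]; ext y; fin_cases y <;> simp
        rcases matching_four_classify hM (by decide) (by decide) (by decide) (by decide) (by decide) (by decide) hv with ⟨h1, h2⟩ | ⟨h1, h2⟩ | ⟨h1, h2⟩
        · exact absurd (M.adj_sub h2) (by decide)
        · have hv2 : M.verts = ({0,3,1,4} : Set (Fin 5)) := by
            ext y; fin_cases y <;> simp [hv]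
          rw [matching_four hM hv2 h1 h2]
          exact Or.inr (Or.inr (Or.inl (rfl)))
        · exact absurd (M.adj_sub h2) (by decide)
      · -- verts = complement of 3
        have hv : M.verts = ({0,1,2,4} : Set (Fin 5)) := by
          rw [hvc]; ext y; fin_cases y <;> simp
        rcases matching_four_classify hM (by decide) (by decide) (by decide) (by decide) (by decide) (by decide) hv with ⟨h1, h2⟩ | ⟨h1, h2⟩ | ⟨h1, h2⟩
        · exact absurd (M.adj_sub h2) (by decide)
        · have hv2 : M.verts = ({0,2,1,4} : Set (Fin 5)) := by
            ext y; fin_cases y <;> simp [hv]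
          rw [matching_four hM hv2 h1 h2]
          exact Or.inr (Or.inr (Or.inr (Or.inl (rfl))))
        · have hv2 : M.verts = ({0,4,1,2} : Set (Fin 5)) := by
            ext y; fin_cases y <;> simp [hv]
          rw [matching_four hM hv2 h1 h2]
          exact Or.inr (Or.inr (Or.inr (Or.inr (Or.inl (rfl)))))
      · -- verts = complement of 4
        have hv : M.verts = ({0,1,2,3} : Set (Fin 5)) := by
          rw [hvc]; ext y; fin_cases y <;> simp
        rcases matching_four_classify hM (by decide) (by decide) (by decide) (by decide) (by decide) (by decide) hv with ⟨h1, h2⟩ | ⟨h1, h2⟩ | ⟨h1, h2⟩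
        · have hv2 : M.verts = ({0,1,2,3} : Set (Fin 5)) := by
            ext y; fin_cases y <;> simp [hv]
          rw [matching_four hM hv2 h1 h2]
          exact Or.inr (Or.inr (Or.inr (Or.inr (Or.inr (Or.inl (rfl))))))
        · exact absurd (M.adj_sub h2) (by decide)
        · have hv2 : M.verts = ({0,3,1,2} : Set (Fin 5)) := by
            ext y; fin_cases y <;> simp [hv]
          rw [matching_four hM hv2 h1 h2]
          exact Or.inr (Or.inr (Or.inr (Or.inr (Or.inr (Or.inr (rfl))))))
    · rintro (rfl | rfl | rfl | rfl | rfl | rfl | rfl)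
      · refine ⟨SimpleGraph.Subgraph.IsMatching.sup
            (SimpleGraph.Subgraph.IsMatching.subgraphOfAdj _)
            (SimpleGraph.Subgraph.IsMatching.subgraphOfAdj _) ?_, ?_⟩
        · rw [e14, e23, SimpleGraph.support_subgraphOfAdj, SimpleGraph.support_subgraphOfAdj]
          exact disj_pair (by decide) (by decide) (by decide) (by decide)
        · have hv : (f1423).verts = ({1,4,2,3} : Set (Fin 5)) := by
            rw [f1423, SimpleGraph.Subgraph.verts_sup, e14, e23,
              SimpleGraph.subgraphOfAdj_verts, SimpleGraph.subgraphOfAdj_verts]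
            ext y; fin_cases y <;> simp
          rw [hv]
          exact ncard4' (by decide) (by decide) (by decide) (by decide) (by decide) (by decide)
      · refine ⟨SimpleGraph.Subgraph.IsMatching.sup
            (SimpleGraph.Subgraph.IsMatching.subgraphOfAdj _)
            (SimpleGraph.Subgraph.IsMatching.subgraphOfAdj _) ?_, ?_⟩
        · rw [e04, e23, SimpleGraph.support_subgraphOfAdj, SimpleGraph.support_subgraphOfAdj]
          exact disj_pair (by decide) (by decide) (by decide) (by decide)
        · have hv : (f0423).verts = ({0,4,2,3} : Set (Fin 5)) := by
            rw [f0423, SimpleGraph.Subgraph.verts_sup, e04, e23,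
              SimpleGraph.subgraphOfAdj_verts, SimpleGraph.subgraphOfAdj_verts]
            ext y; fin_cases y <;> simp
          rw [hv]
          exact ncard4' (by decide) (by decide) (by decide) (by decide) (by decide) (by decide)
      · refine ⟨SimpleGraph.Subgraph.IsMatching.sup
            (SimpleGraph.Subgraph.IsMatching.subgraphOfAdj _)
            (SimpleGraph.Subgraph.IsMatching.subgraphOfAdj _) ?_, ?_⟩
        · rw [e03, e14, SimpleGraph.support_subgraphOfAdj, SimpleGraph.support_subgraphOfAdj]
          exact disj_pair (by decide) (by decide) (by decide) (by decide)
        · have hv : (f0314).verts = ({0,3,1,4} : Set (Fin 5)) := by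
            rw [f0314, SimpleGraph.Subgraph.verts_sup, e03, e14,
              SimpleGraph.subgraphOfAdj_verts, SimpleGraph.subgraphOfAdj_verts]
            ext y; fin_cases y <;> simp
          rw [hv]
          exact ncard4' (by decide) (by decide) (by decide) (by decide) (by decide) (by decide)
      · refine ⟨SimpleGraph.Subgraph.IsMatching.sup
            (SimpleGraph.Subgraph.IsMatching.subgraphOfAdj _)
            (SimpleGraph.Subgraph.IsMatching.subgraphOfAdj _) ?_, ?_⟩
        · rw [e02, e14, SimpleGraph.support_subgraphOfAdj, SimpleGraph.support_subgraphOfAdj]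
          exact disj_pair (by decide) (by decide) (by decide) (by decide)
        · have hv : (f0214).verts = ({0,2,1,4} : Set (Fin 5)) := by
            rw [f0214, SimpleGraph.Subgraph.verts_sup, e02, e14,
              SimpleGraph.subgraphOfAdj_verts, SimpleGraph.subgraphOfAdj_verts]
            ext y; fin_cases y <;> simp
          rw [hv]
          exact ncard4' (by decide) (by decide) (by decide) (by decide) (by decide) (by decide)
      · refine ⟨SimpleGraph.Subgraph.IsMatching.sup
            (SimpleGraph.Subgraph.IsMatching.subgraphOfAdj _)
            (SimpleGraph.Subgraph.IsMatching.subgraphOfAdj _) ?_, ?_⟩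
        · rw [e04, e12, SimpleGraph.support_subgraphOfAdj, SimpleGraph.support_subgraphOfAdj]
          exact disj_pair (by decide) (by decide) (by decide) (by decide)
        · have hv : (f0412).verts = ({0,4,1,2} : Set (Fin 5)) := by
            rw [f0412, SimpleGraph.Subgraph.verts_sup, e04, e12,
              SimpleGraph.subgraphOfAdj_verts, SimpleGraph.subgraphOfAdj_verts]
            ext y; fin_cases y <;> simp
          rw [hv]
          exact ncard4' (by decide) (by decide) (by decide) (by decide) (by decide) (by decide)
      · refine ⟨SimpleGraph.Subgraph.IsMatching.sup
            (SimpleGraph.Subgraph.IsMatching.subgraphOfAdj _)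
            (SimpleGraph.Subgraph.IsMatching.subgraphOfAdj _) ?_, ?_⟩
        · rw [e01, e23, SimpleGraph.support_subgraphOfAdj, SimpleGraph.support_subgraphOfAdj]
          exact disj_pair (by decide) (by decide) (by decide) (by decide)
        · have hv : (f0123).verts = ({0,1,2,3} : Set (Fin 5)) := by
            rw [f0123, SimpleGraph.Subgraph.verts_sup, e01, e23,
              SimpleGraph.subgraphOfAdj_verts, SimpleGraph.subgraphOfAdj_verts]
            ext y; fin_cases y <;> simp
          rw [hv]
          exact ncard4' (by decide) (by decide) (by decide) (by decide) (by decide) (by decide)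
      · refine ⟨SimpleGraph.Subgraph.IsMatching.sup
            (SimpleGraph.Subgraph.IsMatching.subgraphOfAdj _)
            (SimpleGraph.Subgraph.IsMatching.subgraphOfAdj _) ?_, ?_⟩
        · rw [e03, e12, SimpleGraph.support_subgraphOfAdj, SimpleGraph.support_subgraphOfAdj]
          exact disj_pair (by decide) (by decide) (by decide) (by decide)
        · have hv : (f0312).verts = ({0,3,1,2} : Set (Fin 5)) := by
            rw [f0312, SimpleGraph.Subgraph.verts_sup, e03, e12,
              SimpleGraph.subgraphOfAdj_verts, SimpleGraph.subgraphOfAdj_verts]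
            ext y; fin_cases y <;> simp
          rw [hv]
          exact ncard4' (by decide) (by decide) (by decide) (by decide) (by decide) (by decide)
  rw [hset]
  have d0 : f1423 ∉ ({f0423, f0314, f0214, f0412, f0123, f0312} : Set Gex.Subgraph) := by
    simp only [Set.mem_insert_iff, Set.mem_singleton_iff]
    push_neg
    exact ⟨adj_ne 1 4 (by simp [f1423, e14, e23]) (by simp [f0423, e04, e23]), adj_ne 2 3 (by simp [f1423, e14, e23]) (by simp [f0314, e03, e14]), adj_ne 2 3 (by simp [f1423, e14, e23]) (by simp [f0214, e02, e14]), adj_ne 1 4 (by simp [f1423, e14, e23]) (by simp [f0412, e04, e12]), adj_ne 1 4 (by simp [f1423, e14, e23]) (by simp [f0123, e01, e23]), adj_ne 1 4 (by simp [f1423, e14, e23]) (by simp [f0312, e03, e12])⟩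
  have d1 : f0423 ∉ ({f0314, f0214, f0412, f0123, f0312} : Set Gex.Subgraph) := by
    simp only [Set.mem_insert_iff, Set.mem_singleton_iff]
    push_neg
    exact ⟨adj_ne 0 4 (by simp [f0423, e04, e23]) (by simp [f0314, e03, e14]), adj_ne 0 4 (by simp [f0423, e04, e23]) (by simp [f0214, e02, e14]), adj_ne 2 3 (by simp [f0423, e04, e23]) (by simp [f0412, e04, e12]), adj_ne 0 4 (by simp [f0423, e04, e23]) (by simp [f0123, e01, e23]), adj_ne 0 4 (by simp [f0423, e04, e23]) (by simp [f0312, e03, e12])⟩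
  have d2 : f0314 ∉ ({f0214, f0412, f0123, f0312} : Set Gex.Subgraph) := by
    simp only [Set.mem_insert_iff, Set.mem_singleton_iff]
    push_neg
    exact ⟨adj_ne 0 3 (by simp [f0314, e03, e14]) (by simp [f0214, e02, e14]), adj_ne 0 3 (by simp [f0314, e03, e14]) (by simp [f0412, e04, e12]), adj_ne 0 3 (by simp [f0314, e03, e14]) (by simp [f0123, e01, e23]), adj_ne 1 4 (by simp [f0314, e03, e14]) (by simp [f0312, e03, e12])⟩
  have d3 : f0214 ∉ ({f0412, f0123, f0312} : Set Gex.Subgraph) := by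
    simp only [Set.mem_insert_iff, Set.mem_singleton_iff]
    push_neg
    exact ⟨adj_ne 0 2 (by simp [f0214, e02, e14]) (by simp [f0412, e04, e12]), adj_ne 0 2 (by simp [f0214, e02, e14]) (by simp [f0123, e01, e23]), adj_ne 0 2 (by simp [f0214, e02, e14]) (by simp [f0312, e03, e12])⟩
  have d4 : f0412 ∉ ({f0123, f0312} : Set Gex.Subgraph) := by
    simp only [Set.mem_insert_iff, Set.mem_singleton_iff]
    push_neg
    exact ⟨adj_ne 0 4 (by simp [f0412, e04, e12]) (by simp [f0123, e01, e23]), adj_ne 0 4 (by simp [f0412, e04, e12]) (by simp [f0312, e03, e12])⟩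
  have d5 : f0123 ∉ ({f0312} : Set Gex.Subgraph) := by
    simp only [Set.mem_insert_iff, Set.mem_singleton_iff]
    push_neg
    exact adj_ne 0 1 (by simp [f0123, e01, e23]) (by simp [f0312, e03, e12])
  rw [Set.ncard_insert_of_notMem d0 (Set.toFinite _), Set.ncard_insert_of_notMem d1 (Set.toFinite _), Set.ncard_insert_of_notMem d2 (Set.toFinite _), Set.ncard_insert_of_notMem d3 (Set.toFinite _), Set.ncard_insert_of_notMem d4 (Set.toFinite _), Set.ncard_insert_of_notMem d5 (Set.toFinite _), Set.ncard_singleton]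

lemma matchCount_odd' {V : Type*} [Fintype V] (G : SimpleGraph V) (k : ℕ) (hk : Odd k) :
    {M : G.Subgraph | M.IsMatching ∧ M.verts.ncard = k}.ncard = 0 := by
  convert Set.ncard_empty G.Subgraph
  rw [Set.eq_empty_iff_forall_notMem]
  rintro M ⟨hM, hc⟩
  haveI : Fintype M.verts := Fintype.ofFinite _
  have he := hM.even_card
  rw [← Set.ncard_eq_toFinset_card'] at he
  rw [hc] at he
  exact (Nat.not_odd_iff_even.mpr he) hk

lemma matchCount_zero' {V : Type*} [Fintype V] (G : SimpleGraph V) :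
    {M : G.Subgraph | M.IsMatching ∧ M.verts.ncard = 0}.ncard = 1 := by
  convert Set.ncard_singleton (⊥ : G.Subgraph)
  ext M
  simp only [Set.mem_setOf_eq, Set.mem_singleton_iff]
  constructor
  · rintro ⟨hM, hc⟩
    have hv : M.verts = ∅ := by
      rw [Set.ncard_eq_zero (Set.toFinite _)] at hc
      exact hc
    refine SimpleGraph.Subgraph.ext (by simp [hv]) ?_
    funext x y
    simp only [eq_iff_iff, iff_false, SimpleGraph.Subgraph.not_bot_adj]
    intro h
    have := M.edge_vert h
    rw [hv] at this
    exact this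
  · rintro rfl
    refine ⟨fun v hv => absurd hv (by simp), by simp⟩

set_option maxHeartbeats 3200000 in
lemma charpoly_Sex : (Sex.map Complex.ofReal).charpoly = X^5 + C 7 * X^3 + C 7 * X := by
  have h : charmatrix (Sex.map Complex.ofReal) =
      !![X, -1, -1, -1, -1; 1, X, -1, 0, -1; 1, 1, X, -1, 0;
         1, 0, 1, X, 0; 1, 1, 0, 0, X] := by
    refine Matrix.ext fun i j => ?_
    fin_cases i <;> fin_cases j <;>
      norm_num [Matrix.charmatrix, Matrix.one_apply, Matrix.smul_apply, Matrix.sub_apply,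
        Matrix.map_apply, Matrix.diagonal_apply, Fin.ext_iff, Sex, A]
  rw [Matrix.charpoly, h]
  simp only [Matrix.det_succ_row_zero, Fin.sum_univ_succ, Matrix.submatrix_apply,
    Fin.succ_succAbove_zero, Fin.succ_succAbove_succ, Fin.zero_succAbove, Matrix.det_isEmpty,
    Finset.univ_eq_empty, Finset.sum_empty, Matrix.of_apply, Matrix.cons_val_zero, Matrix.cons_val_succ,
    Fin.val_zero, Fin.val_succ]
  norm_num
  ring_nf
  norm_num [map_ofNat]

end SkewAux

open SkewAux in
/-- There is a graph `G` which is not an odd-cycle graph (it contains an even cycle)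
admitting a skew-adjacency matrix `S` with `p_S(x) = (-i)^n · m(G, ix)`. -/
theorem exists_non_oddCycle_graph_with_matching_charpoly :
    ∃ (n : ℕ) (G : SimpleGraph (Fin n)) (S : Matrix (Fin n) (Fin n) ℝ),
      HasEvenCycle G ∧ IsSkewAdj G S ∧
      (S.map Complex.ofReal).charpoly =
        Polynomial.C ((-Complex.I) ^ n) *
          (matchingPoly G).comp (Polynomial.C Complex.I * Polynomial.X) := by
  refine ⟨5, Gex, Sex, ?_, ?_, ?_⟩
  · -- even cycle
    refine ⟨0, .cons (by decide) (.cons (by decide : Gex.Adj 1 2) (.cons (by decide : Gex.Adj 2 3)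
      (.cons (by decide : Gex.Adj 3 0) .nil))), ?_, ?_⟩
    · rw [SimpleGraph.Walk.isCycle_def]
      refine ⟨⟨?_⟩, by simp, ?_⟩
      · simp [SimpleGraph.Walk.edges]
      · simp [SimpleGraph.Walk.support]
    · decide
  · refine ⟨?_, ?_, ?_⟩
    · intro i j
      have h : A j i = - A i j := by revert i j; decide
      simp [Sex, h]
    · intro i j h
      have h' : A i j = 1 ∨ A i j = -1 := by revert h; revert i j; show ∀ i j : Fin 5, A i j ≠ 0 → A i j = 1 ∨ A i j = -1; intro a b; fin_cases a <;> fin_cases b <;> simp [A]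
      rcases h' with h' | h' <;> simp [Sex, h']
    · intro i j h
      have h' : A i j = 0 := by revert h; revert i j; show ∀ i j : Fin 5, ¬ A i j ≠ 0 → A i j = 0; intro a b; fin_cases a <;> fin_cases b <;> simp [A]
      simp [Sex, h']
  · have hmc0 : matchCount Gex 0 = 1 := matchCount_zero' Gex
    have hmc1 : matchCount Gex 1 = 0 := matchCount_odd' Gex 1 (by decide)
    have hmc2 : matchCount Gex 2 = 7 := mc2
    have hmc3 : matchCount Gex 3 = 0 := matchCount_odd' Gex 3 (by decide)
    have hmc4 : matchCount Gex 4 = 7 := mc4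
    have hmc5 : matchCount Gex 5 = 0 := matchCount_odd' Gex 5 (by decide)
    have hmp : matchingPoly Gex = X^5 - C 7 * X^3 + C 7 * X := by
      rw [matchingPoly]
      rw [show (Fintype.card (Fin 5)) = 5 from rfl]
      rw [Finset.sum_range_succ, Finset.sum_range_succ, Finset.sum_range_succ,
        Finset.sum_range_succ, Finset.sum_range_succ, Finset.sum_range_one,
        hmc0, hmc1, hmc2, hmc3, hmc4, hmc5]
      norm_num
      ring
    rw [charpoly_Sex, hmp]
    simp only [add_comp, sub_comp, mul_comp, pow_comp, X_comp, C_comp]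
    ring_nf
    simp only [← Polynomial.C_pow]
    rw [show (Complex.I)^5 = Complex.I from by simp [pow_succ, Complex.I_mul_I],
        show (Complex.I)^3 = -Complex.I from by simp [pow_succ, Complex.I_mul_I]]
    simp only [map_neg, ← Polynomial.C_mul, Complex.I_mul_I, neg_mul, mul_neg, neg_neg,
      _root_.map_one, Polynomial.C_1]
    ring_nf
    simp only [← Polynomial.C_mul, ← Polynomial.C_pow, Complex.I_sq, map_neg, Polynomial.C_1]
    ring
end

section
/- Let G be a connected bipartite graph. If the spectral radius ρ(S) is the same for all skew-adjacency matrices S of G (i.e., over all orientations of G), then G is a tree. -/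
open Polynomial Matrix

variable {V : Type*} [Fintype V] [DecidableEq V]

/-! ### Auxiliary lemmas -/

section Aux

lemma SkewAux.fin2_aux : ∀ x y z : Fin 2, x ≠ y → (x = z ↔ ¬(y = z)) := by decide

lemma SkewAux.walk_parity {W : Type*} {G : SimpleGraph W} (C : G.Coloring (Fin 2)) {u v : W}
    (p : G.Walk u v) : C u = C v ↔ Even p.length := by
  induction p with
  | nil => simp
  | @cons u w v hadj q ih =>
    have h1 : C u ≠ C w := C.valid hadj
    rw [SimpleGraph.Walk.length_cons, Nat.even_add_one, ← ih, SkewAux.fin2_aux _ _ _ h1]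

lemma SkewAux.walk_prod {W : Type*} {G : SimpleGraph W} (M : Matrix W W ℂ) (g : W → ℂ) (κ : ℂ) :
    ∀ {u v : W} (p : G.Walk u v),
      (∀ d ∈ p.darts, M d.fst d.snd * g d.snd = κ * g d.fst) →
      (p.darts.map fun d => M d.fst d.snd).prod * g v = κ ^ p.length * g u := by
  intro u v p
  induction p with
  | nil => intro _; simp
  | @cons u w v hadj q ih =>
    intro hd
    have h0 : M u w * g w = κ * g u := by
      have := hd ⟨(u, w), hadj⟩ (by simp [SimpleGraph.Walk.darts_cons])
      simpa using this
    have hq : ∀ d ∈ q.darts, M d.fst d.snd * g d.snd = κ * g d.fst := by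
      intro d hdm; apply hd; simp [SimpleGraph.Walk.darts_cons, hdm]
    have hih := ih hq
    rw [SimpleGraph.Walk.darts_cons, List.map_cons, List.prod_cons,
      SimpleGraph.Walk.length_cons, pow_succ]
    calc M u w * (q.darts.map fun d => M d.fst d.snd).prod * g v
        = M u w * ((q.darts.map fun d => M d.fst d.snd).prod * g v) := by ring
      _ = M u w * (κ ^ q.length * g w) := by rw [hih]
      _ = κ ^ q.length * (M u w * g w) := by ring
      _ = κ ^ q.length * (κ * g u) := by rw [h0]
      _ = κ ^ q.length * κ * g u := by ring

lemma SkewAux.sameRay_of_abs_sum {ι : Type*} [DecidableEq ι] (s : Finset ι) (f : ι → ℂ)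
    (h : ‖∑ i ∈ s, f i‖ = ∑ i ∈ s, ‖f i‖) {t : ι} (ht : t ∈ s) :
    SameRay ℝ (∑ i ∈ s, f i) (f t) := by
  have hsplit : ∑ i ∈ s, f i = f t + ∑ i ∈ s.erase t, f i := by
    rw [← Finset.sum_erase_add s f ht]; ring
  set rest := ∑ i ∈ s.erase t, f i with hrest
  have habs : ∑ i ∈ s, ‖f i‖
      = ‖f t‖ + ∑ i ∈ s.erase t, ‖f i‖ := by
    rw [← Finset.sum_erase_add s _ ht]; ring
  have hle : ‖rest‖ ≤ ∑ i ∈ s.erase t, ‖f i‖ := by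
    rw [hrest]
    simpa using (norm_sum_le (s.erase t) f)
  have h1 : ‖f t + rest‖ = ‖f t‖ + ‖rest‖ := by
    have e1 : ‖f t + rest‖ ≤ ‖f t‖ + ‖rest‖ := norm_add_le _ _
    have e2 : ‖f t‖ + ‖rest‖ ≤ ‖f t‖ + ∑ i ∈ s.erase t, ‖f i‖ := by
      linarith
    have e3 : ‖f t‖ + ∑ i ∈ s.erase t, ‖f i‖ = ‖f t + rest‖ := by
      rw [← habs, ← h, hsplit]
    linarith
  have hray : SameRay ℝ (f t) rest := sameRay_iff_norm_add.mpr h1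
  rw [hsplit]
  exact ((SameRay.refl (f t)).add_right hray).symm

lemma SkewAux.vecMul_eq_star_mulVec {m : Type*} [Fintype m] (U : Matrix m m ℝ) (y : m → ℝ) :
    y ᵥ* U = (star U) *ᵥ y := by
  ext i
  simp [Matrix.vecMul, Matrix.mulVec, dotProduct, Matrix.star_apply, mul_comm]

lemma SkewAux.quad_eigen {m : Type*} [Fintype m] [DecidableEq m] {A : Matrix m m ℝ}
    (hA : A.IsHermitian) {r : ℝ} (hr : ∀ j, hA.eigenvalues j ≤ r) {y : m → ℝ}
    (hq : r * (y ⬝ᵥ y) ≤ y ⬝ᵥ (A *ᵥ y)) : A *ᵥ y = r • y := by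
  set U : Matrix m m ℝ := (hA.eigenvectorUnitary : Matrix m m ℝ) with hUdef
  have hU : U * star U = 1 := (Matrix.mem_unitaryGroup_iff).mp hA.eigenvectorUnitary.2
  have hU' : star U * U = 1 := (Matrix.mem_unitaryGroup_iff').mp hA.eigenvectorUnitary.2
  set f : m → ℝ := fun j => hA.eigenvalues j with hfdef
  set c : m → ℝ := (star U) *ᵥ y with hcdef
  have hAyd : A *ᵥ y = U *ᵥ (diagonal f *ᵥ c) := by
    conv_lhs => rw [hA.spectral_theorem, Unitary.conjStarAlgAut_apply]
    rw [← Matrix.mulVec_mulVec, ← Matrix.mulVec_mulVec]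
    rfl
  have hyc : y ⬝ᵥ (U *ᵥ (diagonal f *ᵥ c)) = c ⬝ᵥ (diagonal f *ᵥ c) := by
    rw [Matrix.dotProduct_mulVec, SkewAux.vecMul_eq_star_mulVec]
  have hyy : y ⬝ᵥ y = c ⬝ᵥ c := by
    have : y ⬝ᵥ y = y ⬝ᵥ ((U * star U) *ᵥ y) := by rw [hU, Matrix.one_mulVec]
    rw [this, ← Matrix.mulVec_mulVec, Matrix.dotProduct_mulVec, SkewAux.vecMul_eq_star_mulVec]
  have hsum : ∑ j, (r - f j) * (c j * c j) ≤ 0 := by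
    have h1 : c ⬝ᵥ (diagonal f *ᵥ c) = ∑ j, f j * (c j * c j) := by
      simp [dotProduct, Matrix.mulVec_diagonal]
      congr 1; ext j; ring
    have h2 : c ⬝ᵥ c = ∑ j, c j * c j := rfl
    have hthis := hq
    rw [hAyd, hyc, hyy] at hthis
    rw [h1, h2] at hthis
    have heq : ∑ j, (r - f j) * (c j * c j)
        = r * (∑ j, c j * c j) - ∑ j, f j * (c j * c j) := by
      rw [Finset.mul_sum, ← Finset.sum_sub_distrib]
      congr 1; ext j; ring
    rw [heq]
    linarith
  have hterm : ∀ j, (r - f j) * (c j * c j) = 0 := by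
    intro j
    have hnn : ∀ j ∈ Finset.univ, 0 ≤ (r - f j) * (c j * c j) := fun j _ =>
      mul_nonneg (by linarith [hr j]) (mul_self_nonneg _)
    have hz : ∑ j, (r - f j) * (c j * c j) = 0 :=
      le_antisymm hsum (Finset.sum_nonneg hnn)
    exact (Finset.sum_eq_zero_iff_of_nonneg hnn).mp hz j (Finset.mem_univ j)
  have hfc : ∀ j, f j * c j = r * c j := by
    intro j
    rcases mul_eq_zero.mp (hterm j) with h | h
    · have : f j = r := by linarith
      rw [this]
    · have : c j = 0 := by nlinarith [mul_self_nonneg (c j)]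
      rw [this, mul_zero, mul_zero]
  have hdc : diagonal f *ᵥ c = r • c := by
    ext j
    rw [Matrix.mulVec_diagonal]
    simpa using hfc j
  rw [hAyd, hdc, Matrix.mulVec_smul]
  congr 1
  rw [hcdef, Matrix.mulVec_mulVec, hU, Matrix.one_mulVec]

lemma SkewAux.det_smul_one_sub {𝕜 : Type*} [RCLike 𝕜] {m : Type*} [Fintype m] [DecidableEq m]
    {B : Matrix m m 𝕜} (hB : B.IsHermitian) (w : 𝕜) :
    (w • (1 : Matrix m m 𝕜) - B).det = ∏ j, (w - (hB.eigenvalues j : 𝕜)) := by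
  set U : Matrix m m 𝕜 := (hB.eigenvectorUnitary : Matrix m m 𝕜) with hUdef
  have hU : U * star U = 1 := (Matrix.mem_unitaryGroup_iff).mp hB.eigenvectorUnitary.2
  have key : w • (1 : Matrix m m 𝕜) - B
      = U * (w • (1 : Matrix m m 𝕜) - diagonal (RCLike.ofReal ∘ hB.eigenvalues)) * star U := by
    rw [Matrix.mul_sub, Matrix.sub_mul]
    congr 1
    · rw [Matrix.mul_smul, Matrix.mul_one, Matrix.smul_mul, hU]
    · exact hB.spectral_theorem
  rw [key, Matrix.det_mul, Matrix.det_mul]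
  have hdet : det U * det (star U) = 1 := by
    rw [← Matrix.det_mul, hU, Matrix.det_one]
  calc det U * det (w • 1 - diagonal (RCLike.ofReal ∘ hB.eigenvalues)) * det (star U)
      = (det U * det (star U)) * det (w • 1 - diagonal (RCLike.ofReal ∘ hB.eigenvalues)) := by
        ring
    _ = det (w • 1 - diagonal (RCLike.ofReal ∘ hB.eigenvalues)) := by rw [hdet, one_mul]
    _ = ∏ j, (w - (hB.eigenvalues j : 𝕜)) := by
        rw [Matrix.smul_one_eq_diagonal, Matrix.diagonal_sub, Matrix.det_diagonal]
        rfl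

lemma SkewAux.charpoly_eval {R : Type*} [CommRing R] {m : Type*} [Fintype m] [DecidableEq m]
    (M : Matrix m m R) (r : R) :
    M.charpoly.eval r = (r • (1 : Matrix m m R) - M).det := by
  rw [Matrix.charpoly, _root_.eval_det, Matrix.matPolyEquiv_charmatrix]
  simp [Matrix.scalar_apply, Matrix.smul_one_eq_diagonal]

lemma SkewAux.specSet_finite {n : ℕ} (N : Matrix (Fin n) (Fin n) ℂ) :
    {r : ℝ | ∃ z : ℂ, N.charpoly.IsRoot z ∧ r = ‖z‖}.Finite := by
  have heq : {r : ℝ | ∃ z : ℂ, N.charpoly.IsRoot z ∧ r = ‖z‖}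
      = (fun z : ℂ => ‖z‖) '' {z : ℂ | N.charpoly.IsRoot z} := by
    ext r
    simp only [Set.mem_setOf_eq, Set.mem_image]
    constructor
    · rintro ⟨z, hz, rfl⟩; exact ⟨z, hz, rfl⟩
    · rintro ⟨z, hz, rfl⟩; exact ⟨z, hz, rfl⟩
  rw [heq]
  exact (Polynomial.finite_setOf_isRoot (N.charpoly_monic.ne_zero)).image _

lemma SkewAux.specSet_nonempty {n : ℕ} (hn : 0 < n) (N : Matrix (Fin n) (Fin n) ℂ) :
    {r : ℝ | ∃ z : ℂ, N.charpoly.IsRoot z ∧ r = ‖z‖}.Nonempty := by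
  have hdeg : 0 < N.charpoly.degree := by
    rw [Matrix.charpoly_degree_eq_dim]
    simpa using hn
  obtain ⟨z, hz⟩ := Complex.exists_root hdeg
  exact ⟨‖z‖, z, hz, rfl⟩

end Aux

lemma SkewAux.core {n : ℕ} {G : SimpleGraph (Fin n)} [DecidableRel G.Adj] (hconn : G.Connected)
    {S : Matrix (Fin n) (Fin n) ℝ} (hS : IsSkewAdj G S) {ρ : ℝ}
    (hub : ∀ t : ℝ, (t • (1 : Matrix (Fin n) (Fin n) ℝ) - G.adjMatrix ℝ).det = 0 → t ≤ ρ)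
    {μ : ℝ} (hμρ : |μ| = ρ) {x : Fin n → ℂ} (hx0 : x ≠ 0)
    (hxe : (Complex.I • S.map Complex.ofReal) *ᵥ x = (μ : ℂ) • x)
    {a : Fin n} (w : G.Walk a a) (hev : Even w.length) :
    (w.darts.map fun d => Complex.I * (S d.fst d.snd : ℂ)).prod = 1 := by
  classical
  set A := G.adjMatrix ℝ with hAdef
  have hASymm : A.IsHermitian := by
    ext i j
    simp [hAdef, Matrix.conjTranspose_apply, SimpleGraph.adjMatrix_apply, SimpleGraph.adj_comm]
  set M1 : Matrix (Fin n) (Fin n) ℂ := Complex.I • S.map Complex.ofReal with hM1def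
  have habsM1 : ∀ u v, ‖M1 u v‖ = A u v := by
    intro u v
    by_cases hadj : G.Adj u v
    · rcases hS.2.1 u v hadj with h | h <;>
        simp [hM1def, hAdef, Matrix.smul_apply, Matrix.map_apply, h, hadj]
    · simp [hM1def, hAdef, Matrix.smul_apply, Matrix.map_apply, hS.2.2 u v hadj, hadj]
  set y : Fin n → ℝ := fun u => ‖x u‖ with hydef
  have hynn : ∀ u, 0 ≤ y u := fun u => norm_nonneg _
  have hM1x : ∀ u, (M1 *ᵥ x) u = (μ : ℂ) * x u := by
    intro u
    rw [hxe]
    simp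
  have hAyapp : ∀ u, (A *ᵥ y) u = ∑ v, A u v * y v := by
    intro u; rfl
  have hptw : ∀ u, ρ * y u ≤ (A *ᵥ y) u := by
    intro u
    have h1 : ‖(M1 *ᵥ x) u‖ = ρ * y u := by
      rw [hM1x u, norm_mul, Complex.norm_real, Real.norm_eq_abs, ← hμρ]
    have h2 : ‖(M1 *ᵥ x) u‖ ≤ ∑ v, A u v * y v := by
      have : (M1 *ᵥ x) u = ∑ v, M1 u v * x v := rfl
      rw [this]
      refine le_trans (norm_sum_le _ _) ?_
      apply le_of_eq
      refine Finset.sum_congr rfl fun v _ => ?_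
      rw [norm_mul, ← habsM1 u v]
    rw [← h1, hAyapp]
    exact h2
  have hq : ρ * (y ⬝ᵥ y) ≤ y ⬝ᵥ (A *ᵥ y) := by
    have : ∀ u ∈ Finset.univ, y u * (ρ * y u) ≤ y u * (A *ᵥ y) u := fun u _ =>
      mul_le_mul_of_nonneg_left (hptw u) (hynn u)
    have hsum := Finset.sum_le_sum this
    calc ρ * (y ⬝ᵥ y) = ∑ u, y u * (ρ * y u) := by
          simp [dotProduct, Finset.mul_sum]; congr 1; ext u; ring
      _ ≤ ∑ u, y u * (A *ᵥ y) u := hsum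
      _ = y ⬝ᵥ (A *ᵥ y) := rfl
  have heig : ∀ j, hASymm.eigenvalues j ≤ ρ := by
    intro j
    apply hub
    rw [SkewAux.det_smul_one_sub hASymm]
    exact Finset.prod_eq_zero (Finset.mem_univ j) (by simp)
  have hAy : A *ᵥ y = ρ • y := SkewAux.quad_eigen hASymm heig hq
  obtain ⟨u₀, hu₀⟩ : ∃ u, x u ≠ 0 := Function.ne_iff.mp hx0
  have hy₀ : 0 < y u₀ := by
    simp only [hydef]
    exact norm_pos_iff.mpr hu₀
  have hstep : ∀ {u v : Fin n}, G.Adj u v → 0 < y u → 0 < y v := by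
    intro u v hadj hu
    rcases lt_or_eq_of_le (hynn v) with h | h
    · exact h
    · exfalso
      have hAyv : (A *ᵥ y) v = 0 := by rw [hAy]; simp [← h]
      have hterm : A v u * y u ≤ ∑ z, A v z * y z :=
        Finset.single_le_sum (fun z _ => mul_nonneg (by simp [hAdef]; positivity) (hynn z))
          (Finset.mem_univ u)
      rw [← hAyapp, hAyv] at hterm
      have : A v u * y u = y u := by simp [hAdef, hadj.symm]
      rw [this] at hterm
      linarith
  have hywalk : ∀ {c d : Fin n} (p : G.Walk c d), 0 < y c → 0 < y d := by
    intro c d p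
    induction p with
    | nil => exact id
    | cons hadj q ih => exact fun hc => ih (hstep hadj hc)
  have hypos : ∀ u, 0 < y u := fun u => (hconn.preconnected u₀ u).elim fun p => hywalk p hy₀
  have hxne : ∀ u, x u ≠ 0 := by
    intro u
    have := hypos u
    exact norm_pos_iff.mp this
  cases w with
  | nil => simp
  | @cons _ b _ hadj p =>
    have hab1 : A a b = 1 := by simp [hAdef, hadj]
    have hρpos : 0 < ρ := by
      have hterm : A a b * y b ≤ ∑ z, A a z * y z :=
        Finset.single_le_sum
          (fun z _ => mul_nonneg (by simp [hAdef]; positivity) (hynn z)) (Finset.mem_univ b)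
      rw [hab1, one_mul, ← hAyapp, hAy] at hterm
      have h2 : (ρ • y) a = ρ * y a := rfl
      rw [h2] at hterm
      have h3 : 0 < ρ * y a := lt_of_lt_of_le (hypos b) hterm
      rcases mul_pos_iff.mp h3 with ⟨h4, _⟩ | ⟨_, h5⟩
      · exact h4
      · exact absurd (hypos a) (asymm h5)
    have hμne : (μ : ℂ) ≠ 0 := by
      simp only [ne_eq, Complex.ofReal_eq_zero]
      intro hm
      rw [hm] at hμρ
      simp at hμρ
      rw [← hμρ] at hρpos
      exact lt_irrefl _ hρpos
    have hρneC : (ρ : ℂ) ≠ 0 := by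
      simp only [ne_eq, Complex.ofReal_eq_zero]
      exact ne_of_gt hρpos
    have hyneC : ∀ u, (y u : ℂ) ≠ 0 := by
      intro u
      simp only [ne_eq, Complex.ofReal_eq_zero]
      exact ne_of_gt (hypos u)
    set g : Fin n → ℂ := fun v => x v * (y v : ℂ)⁻¹ with hgdef
    have hgne : ∀ v, g v ≠ 0 := fun v => mul_ne_zero (hxne v) (inv_ne_zero (hyneC v))
    set κ : ℂ := (μ : ℂ) * (ρ : ℂ)⁻¹ with hκdef
    have hE : ∀ u v, G.Adj u v → M1 u v * g v = κ * g u := by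
      intro u v hadjuv
      have hsum : ∑ v', M1 u v' * x v' = (μ : ℂ) * x u := by rw [← hM1x u]; rfl
      have hRHS : ∑ v', ‖M1 u v' * x v'‖ = ρ * y u := by
        have hterms : ∀ v' ∈ Finset.univ, ‖M1 u v' * x v'‖ = A u v' * y v' := by
          intro v' _
          rw [norm_mul, habsM1]
        rw [Finset.sum_congr rfl hterms, ← hAyapp, hAy]
        rfl
      have habs_eq : ‖∑ v', M1 u v' * x v'‖
          = ∑ v', ‖M1 u v' * x v'‖ := by
        rw [hsum, norm_mul, Complex.norm_real, Real.norm_eq_abs, hRHS, hμρ]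
      have hray := SkewAux.sameRay_of_abs_sum Finset.univ (fun v' => M1 u v' * x v')
        habs_eq (Finset.mem_univ v)
      rw [hsum] at hray
      have hne : (μ : ℂ) * x u ≠ 0 := mul_ne_zero hμne (hxne u)
      obtain ⟨r, hr0, hreq⟩ := hray.exists_nonneg_left hne
      have habsr : y v = r * (ρ * y u) := by
        have hcongr := congrArg (fun z : ℂ => ‖z‖) hreq
        rw [Complex.real_smul, norm_mul, norm_mul, norm_mul,
          Complex.norm_real, Complex.norm_real, Real.norm_eq_abs, Real.norm_eq_abs,
          abs_of_nonneg hr0, hμρ] at hcongr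
        have hML : ‖M1 u v‖ = 1 := by rw [habsM1]; simp [hAdef, hadjuv]
        rw [hML, one_mul] at hcongr
        exact hcongr.symm
      have hrc : (r : ℂ) = (y v : ℂ) * ((ρ : ℂ) * (y u : ℂ))⁻¹ := by
        rw [habsr]
        push_cast
        rw [mul_assoc, mul_inv_cancel₀ (mul_ne_zero hρneC (hyneC u)), mul_one]
      have hbeta : r • ((μ : ℂ) * x u) = M1 u v * x v := hreq
      have hreq' : M1 u v * x v = (r : ℂ) * ((μ : ℂ) * x u) := by
        rw [← hbeta, Complex.real_smul]
      rw [hgdef, hκdef]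
      show M1 u v * (x v * (y v : ℂ)⁻¹) = (μ : ℂ) * (ρ : ℂ)⁻¹ * (x u * (y u : ℂ)⁻¹)
      rw [← mul_assoc, hreq', hrc]
      field_simp [hyneC v, hyneC u, hρneC]
    have hdarts : ∀ d ∈ (SimpleGraph.Walk.cons hadj p).darts,
        M1 d.fst d.snd * g d.snd = κ * g d.fst := fun d _ => hE _ _ d.adj
    have hmain := SkewAux.walk_prod M1 g κ (SimpleGraph.Walk.cons hadj p) hdarts
    have hP : ((SimpleGraph.Walk.cons hadj p).darts.map fun d => M1 d.fst d.snd).prod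
        = κ ^ (SimpleGraph.Walk.cons hadj p).length := mul_right_cancel₀ (hgne a) hmain
    have hκ2 : κ ^ 2 = 1 := by
      have hμ2 : μ ^ 2 = ρ ^ 2 := by rw [← hμρ]; exact (sq_abs μ).symm
      rw [hκdef]
      field_simp
      exact_mod_cast hμ2
    obtain ⟨k, hk⟩ := hev
    have hκL : κ ^ (SimpleGraph.Walk.cons hadj p).length = 1 := by
      rw [hk, ← two_mul, pow_mul, hκ2, one_pow]
    have hMeq : ((SimpleGraph.Walk.cons hadj p).darts.map
          fun d => Complex.I * (S d.fst d.snd : ℂ))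
        = ((SimpleGraph.Walk.cons hadj p).darts.map fun d => M1 d.fst d.snd) := by
      refine List.map_congr_left fun d _ => ?_
      simp [hM1def, Matrix.smul_apply, Matrix.map_apply]
    rw [hMeq, hP, hκL]


/-- If a connected bipartite graph has the same skew spectral radius for all of its
skew-adjacency matrices, then it is a tree. -/
theorem skew_spectral_radius_constant_bipartite_implies_tree {n : ℕ}
    (G : SimpleGraph (Fin n)) (hconn : G.Connected) (hbip : G.Colorable 2)
    (h : ∀ S S' : Matrix (Fin n) (Fin n) ℝ, IsSkewAdj G S → IsSkewAdj G S' →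
      specRad (S.map Complex.ofReal) = specRad (S'.map Complex.ofReal)) :
    G.IsTree := by
  classical
  letI : DecidableRel G.Adj := Classical.decRel _
  refine ⟨hconn, ?_⟩
  by_contra hac
  obtain ⟨a, w, hwc⟩ : ∃ (v : Fin n) (c : G.Walk v v), c.IsCycle := by
    unfold SimpleGraph.IsAcyclic at hac
    push_neg at hac
    obtain ⟨v, c, hc⟩ := hac
    exact ⟨v, c, hc⟩
  have C : G.Coloring (Fin 2) := hbip.some
  have hev : Even w.length := (SkewAux.walk_parity C w).mp rfl
  cases w with
  | nil => exact hwc.ne_nil rfl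
  | @cons _ b _ hadj p =>
  -- notation
  set ψ : Fin n → ℂ := fun u => if C u = 0 then Complex.I else 1 with hψdef
  have hψunit : ∀ u, ψ u * (starRingEnd ℂ) (ψ u) = 1 := by
    intro u
    by_cases hcu : C u = 0 <;> simp [hψdef, hcu, Complex.mul_conj]
  have hψne : ∀ u, ψ u ≠ 0 := by
    intro u
    by_cases hcu : C u = 0 <;> simp [hψdef, hcu, Complex.I_ne_zero]
  set S0 : Matrix (Fin n) (Fin n) ℝ :=
    fun u v => if G.Adj u v then (if C u = 0 then 1 else -1) else 0 with hS0def
  have hS0 : IsSkewAdj G S0 := by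
    refine ⟨?_, ?_, ?_⟩
    · intro i j
      by_cases hij : G.Adj i j
      · have hji := hij.symm
        have hCij : C i ≠ C j := C.valid hij
        have hiff : C j = 0 ↔ ¬ C i = 0 := SkewAux.fin2_aux _ _ _ hCij.symm
        by_cases hci : C i = 0
        · have hcj : ¬ C j = 0 := by
            intro hcj
            exact (hiff.mp hcj) hci
          simp [hS0def, hij, hji, hci, hcj]
        · have hcj : C j = 0 := hiff.mpr hci
          simp [hS0def, hij, hji, hci, hcj]
      · have hji : ¬ G.Adj j i := fun hh => hij hh.symm
        simp [hS0def, hij, hji]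
    · intro i j hij
      by_cases hci : C i = 0 <;> simp [hS0def, hij, hci]
    · intro i j hij
      simp [hS0def, hij]
  set S1 : Matrix (Fin n) (Fin n) ℝ :=
    fun u v => if s(u, v) = s(a, b) then -(S0 u v) else S0 u v with hS1def
  have hS1 : IsSkewAdj G S1 := by
    refine ⟨?_, ?_, ?_⟩
    · intro i j
      have hsw : s(j, i) = s(i, j) := Sym2.eq_swap
      show (if s(j, i) = s(a, b) then -(S0 j i) else S0 j i)
          = -(if s(i, j) = s(a, b) then -(S0 i j) else S0 i j)
      rw [hsw, hS0.1 i j]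
      by_cases hcond : s(i, j) = s(a, b) <;> simp [hcond]
    · intro i j hij
      show (if s(i, j) = s(a, b) then -(S0 i j) else S0 i j) = 1
          ∨ (if s(i, j) = s(a, b) then -(S0 i j) else S0 i j) = -1
      rcases hS0.2.1 i j hij with h0 | h0 <;>
        by_cases hcond : s(i, j) = s(a, b) <;>
        simp [hcond, h0]
    · intro i j hij
      have h0 := hS0.2.2 i j hij
      show (if s(i, j) = s(a, b) then -(S0 i j) else S0 i j) = 0
      by_cases hcond : s(i, j) = s(a, b) <;> simp [hcond, h0]
  -- the common spectral radius
  set ρ : ℝ := specRad (S0.map Complex.ofReal) with hρdef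
  have hρeq : specRad (S1.map Complex.ofReal) = ρ := (h S1 S0 hS1 hS0)
  have hn : 0 < n := Fin.pos a
  set A : Matrix (Fin n) (Fin n) ℝ := G.adjMatrix ℝ with hAdef
  set Ac : Matrix (Fin n) (Fin n) ℂ := A.map Complex.ofReal with hAcdef
  set D : Matrix (Fin n) (Fin n) ℂ := diagonal ψ with hDdef
  set Ds : Matrix (Fin n) (Fin n) ℂ := diagonal (fun u => (starRingEnd ℂ) (ψ u)) with hDsdef
  have hDDs : D * Ds = 1 := by
    rw [hDdef, hDsdef, Matrix.diagonal_mul_diagonal]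
    have hfun : (fun u => ψ u * (starRingEnd ℂ) (ψ u)) = fun _ => 1 := funext hψunit
    rw [hfun, Matrix.diagonal_one]
  have hCval : ∀ {u v : Fin n}, G.Adj u v → ¬ C u = 0 → C v = 0 := by
    intro u v huv hcu
    exact (SkewAux.fin2_aux (C v) (C u) 0 (C.valid huv).symm).mpr hcu
  have hS0C : S0.map Complex.ofReal = D * ((-Complex.I) • Ac) * Ds := by
    ext u v
    have hRHS : (D * ((-Complex.I) • Ac) * Ds) u v
        = ψ u * (-Complex.I * Ac u v) * (starRingEnd ℂ) (ψ v) := by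
      rw [Matrix.mul_diagonal, Matrix.diagonal_mul, Matrix.smul_apply, smul_eq_mul]
    rw [hRHS, Matrix.map_apply]
    by_cases huv : G.Adj u v
    · have hAc1 : Ac u v = 1 := by simp [hAcdef, hAdef, Matrix.map_apply, huv]
      by_cases hcu : C u = 0
      · have hcv : ¬ C v = 0 := fun hh => (C.valid huv) (hcu.trans hh.symm)
        simp [Matrix.map_apply, hS0def, hψdef, huv, hcu, hcv, hAc1]
      · have hcv : C v = 0 := hCval huv hcu
        simp [Matrix.map_apply, hS0def, hψdef, huv, hcu, hcv, hAc1]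
    · have hAc0 : Ac u v = 0 := by simp [hAcdef, hAdef, Matrix.map_apply, huv]
      simp [Matrix.map_apply, hS0def, huv, hAc0]
  have hubA : ∀ t : ℝ, (t • (1 : Matrix (Fin n) (Fin n) ℝ) - G.adjMatrix ℝ).det = 0 → t ≤ ρ := by
    intro t ht
    have htC : ((t : ℂ) • (1 : Matrix (Fin n) (Fin n) ℂ) - Ac).det = 0 := by
      have hmap : ((t • (1 : Matrix (Fin n) (Fin n) ℝ) - A).map Complex.ofReal)
          = (t : ℂ) • (1 : Matrix (Fin n) (Fin n) ℂ) - Ac := by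
        ext u v
        by_cases huv : u = v <;>
          simp [Matrix.map_apply, Matrix.sub_apply, Matrix.smul_apply, Matrix.one_apply, huv,
            hAcdef]
      rw [← hmap]
      have hdet := (RingHom.map_det Complex.ofRealHom (t • (1 : Matrix (Fin n) (Fin n) ℝ) - A)).symm
      calc ((t • (1 : Matrix (Fin n) (Fin n) ℝ) - A).map Complex.ofReal).det
          = Complex.ofRealHom ((t • (1 : Matrix (Fin n) (Fin n) ℝ) - A).det) := hdet
        _ = 0 := by rw [ht]; simp
    set z : ℂ := -(Complex.I * (t : ℂ)) with hzdef
    have hDtD : (t : ℂ) • (1 : Matrix (Fin n) (Fin n) ℂ) - D * Ac * Ds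
        = D * ((t : ℂ) • (1 : Matrix (Fin n) (Fin n) ℂ) - Ac) * Ds := by
      rw [Matrix.mul_sub, Matrix.sub_mul]
      congr 1
      rw [Matrix.mul_smul, Matrix.mul_one, Matrix.smul_mul, hDDs]
    have hDAD : z • (1 : Matrix (Fin n) (Fin n) ℂ) - S0.map Complex.ofReal
        = (-Complex.I) • ((t : ℂ) • (1 : Matrix (Fin n) (Fin n) ℂ) - D * Ac * Ds) := by
      rw [hS0C, smul_sub, smul_smul]
      congr 1
      · rw [hzdef]
        congr 1
        ring
      · rw [Matrix.mul_smul, Matrix.smul_mul]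
    have hdet1 : (z • (1 : Matrix (Fin n) (Fin n) ℂ) - S0.map Complex.ofReal).det = 0 := by
      rw [hDAD, hDtD, Matrix.det_smul, Matrix.det_mul, Matrix.det_mul, htC]
      ring
    have hroot : (S0.map Complex.ofReal).charpoly.IsRoot z := by
      rw [Polynomial.IsRoot, SkewAux.charpoly_eval, hdet1]
    have habsz : ‖z‖ = |t| := by
      rw [hzdef]
      simp [norm_mul, Complex.norm_real]
    have hmem : |t| ∈ {r : ℝ | ∃ z : ℂ, (S0.map Complex.ofReal).charpoly.IsRoot z
        ∧ r = ‖z‖} := ⟨z, hroot, habsz.symm⟩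
    have hle : |t| ≤ ρ :=
      le_csSup (SkewAux.specSet_finite (S0.map Complex.ofReal)).bddAbove hmem
    exact le_trans (le_abs_self t) hle
  -- extract eigen data for the flipped orientation
  set M1 : Matrix (Fin n) (Fin n) ℂ := Complex.I • (S1.map Complex.ofReal) with hM1def
  have hM1H : M1.IsHermitian := by
    ext i j
    have hskew := hS1.1 i j
    rw [Matrix.conjTranspose_apply, hM1def, Matrix.smul_apply, Matrix.smul_apply,
      Matrix.map_apply, Matrix.map_apply, hskew]
    simp [_root_.map_mul, Complex.conj_ofReal, Complex.conj_I]
  have hmem1 : ρ ∈ {r : ℝ | ∃ z : ℂ, (S1.map Complex.ofReal).charpoly.IsRoot z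
      ∧ r = ‖z‖} := by
    rw [← hρeq]
    exact Set.Nonempty.csSup_mem (SkewAux.specSet_nonempty hn _) (SkewAux.specSet_finite _)
  obtain ⟨z₀, hz₀root, hz₀abs⟩ := hmem1
  have hdet0 : ((Complex.I * z₀) • (1 : Matrix (Fin n) (Fin n) ℂ) - M1).det = 0 := by
    have h0 : (z₀ • (1 : Matrix (Fin n) (Fin n) ℂ) - S1.map Complex.ofReal).det = 0 := by
      rw [← SkewAux.charpoly_eval]
      exact hz₀root
    have hid : z₀ • (1 : Matrix (Fin n) (Fin n) ℂ) - S1.map Complex.ofReal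
        = (-Complex.I) • ((Complex.I * z₀) • (1 : Matrix (Fin n) (Fin n) ℂ) - M1) := by
      rw [hM1def, smul_sub, smul_smul, smul_smul]
      congr 1
      · congr 1
        rw [← mul_assoc, neg_mul, Complex.I_mul_I, neg_neg, one_mul]
      · have : -Complex.I * Complex.I = 1 := by
          rw [neg_mul, Complex.I_mul_I, neg_neg]
        rw [this, one_smul]
    rw [hid, Matrix.det_smul] at h0
    rcases mul_eq_zero.mp h0 with hbad | hgood
    · exfalso
      have : (-Complex.I) ^ Fintype.card (Fin n) ≠ 0 := by
        apply pow_ne_zero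
        simp [Complex.I_ne_zero]
      exact this hbad
    · exact hgood
  have hprodeig0 := SkewAux.det_smul_one_sub hM1H (Complex.I * z₀)
  have hprodeig : ∏ j, ((Complex.I * z₀) - (RCLike.ofReal (hM1H.eigenvalues j) : ℂ)) = 0 := by
    rw [← hprodeig0]
    exact hdet0
  obtain ⟨j0, _, hj0⟩ := Finset.prod_eq_zero_iff.mp hprodeig
  set μ : ℝ := hM1H.eigenvalues j0 with hμdef
  have hμz : ((μ : ℝ) : ℂ) = Complex.I * z₀ := by
    have hcoe : ((μ : ℝ) : ℂ) = (RCLike.ofReal (hM1H.eigenvalues j0) : ℂ) := rfl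
    rw [hcoe]
    exact (sub_eq_zero.mp hj0).symm
  have hμρ : |μ| = ρ := by
    have h1 : ‖((μ : ℝ) : ℂ)‖ = ‖z₀‖ := by
      rw [hμz, norm_mul, Complex.norm_I, one_mul]
    rw [Complex.norm_real, Real.norm_eq_abs] at h1
    rw [h1, ← hz₀abs]
  set x : Fin n → ℂ := ⇑(hM1H.eigenvectorBasis j0) with hxdef
  have hx0 : x ≠ 0 := by
    intro hx
    have h1 : ‖hM1H.eigenvectorBasis j0‖ = 1 := hM1H.eigenvectorBasis.orthonormal.1 j0
    have h2 : (hM1H.eigenvectorBasis j0) = 0 := PiLp.ext fun i => congrFun hx i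
    rw [h2, norm_zero] at h1
    norm_num at h1
  have hxe : M1 *ᵥ x = (μ : ℂ) • x := by
    have hbase := hM1H.mulVec_eigenvectorBasis j0
    rw [hxdef]
    funext u
    have h1 := congrFun hbase u
    rw [h1]
    show (μ • ⇑(hM1H.eigenvectorBasis j0)) u = ((μ : ℂ) • ⇑(hM1H.eigenvectorBasis j0)) u
    rw [Pi.smul_apply, Pi.smul_apply, Complex.real_smul, smul_eq_mul]
  have hprod1 : (((SimpleGraph.Walk.cons hadj p).darts).map
      fun d => Complex.I * (S1 d.fst d.snd : ℂ)).prod = 1 :=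
    SkewAux.core hconn hS1 hubA hμρ hx0 hxe (SimpleGraph.Walk.cons hadj p) hev
  -- direct computation of the same product
  have hrel : ∀ d ∈ p.darts,
      (Matrix.of fun u v => Complex.I * ((S1 u v : ℝ) : ℂ)) d.fst d.snd * ψ d.snd
        = 1 * ψ d.fst := by
    intro d hd
    have hdadj : G.Adj d.fst d.snd := d.adj
    have hedge : d.edge ∈ p.edges := List.mem_map_of_mem hd
    have hnodup : ((SimpleGraph.Walk.cons hadj p).edges).Nodup := hwc.isCircuit.isTrail.edges_nodup
    rw [SimpleGraph.Walk.edges_cons] at hnodup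
    have hnotmem := (List.nodup_cons.mp hnodup).1
    have hnab : ¬ s(d.fst, d.snd) = s(a, b) := by
      intro hcontra
      apply hnotmem
      have hde : d.edge = s(a, b) := hcontra
      rwa [hde] at hedge
    have hS1eq : S1 d.fst d.snd = S0 d.fst d.snd := by
      show (if s(d.fst, d.snd) = s(a, b) then -(S0 d.fst d.snd) else S0 d.fst d.snd)
          = S0 d.fst d.snd
      rw [if_neg hnab]
    show Complex.I * ((S1 d.fst d.snd : ℝ) : ℂ) * ψ d.snd = 1 * ψ d.fst
    rw [hS1eq]
    by_cases hc : C d.fst = 0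
    · have hc2 : ¬ C d.snd = 0 := fun hh => (C.valid hdadj) (hc.trans hh.symm)
      simp [hS0def, hψdef, hdadj, hc, hc2]
    · have hc2 : C d.snd = 0 := hCval hdadj hc
      simp [hS0def, hψdef, hdadj, hc, hc2]
  have htele := SkewAux.walk_prod (Matrix.of fun u v => Complex.I * ((S1 u v : ℝ) : ℂ)) ψ 1 p hrel
  rw [one_pow, one_mul] at htele
  have hPp : (p.darts.map fun d => Complex.I * ((S1 d.fst d.snd : ℝ) : ℂ)).prod
      = ψ b * (ψ a)⁻¹ := by
    rw [eq_mul_inv_iff_mul_eq₀ (hψne a)]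
    have : (p.darts.map fun d =>
        (Matrix.of fun u v => Complex.I * ((S1 u v : ℝ) : ℂ)) d.fst d.snd).prod * ψ a = ψ b :=
      htele
    exact this
  have hsplit : (((SimpleGraph.Walk.cons hadj p).darts).map
      fun d => Complex.I * (S1 d.fst d.snd : ℂ)).prod
      = (Complex.I * (S1 a b : ℂ)) * (ψ b * (ψ a)⁻¹) := by
    rw [SimpleGraph.Walk.darts_cons, List.map_cons, List.prod_cons, hPp]
  have hS1ab : S1 a b = -(S0 a b) := by
    show (if s(a, b) = s(a, b) then -(S0 a b) else S0 a b) = -(S0 a b)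
    rw [if_pos rfl]
  have hfinal : (Complex.I * (S1 a b : ℂ)) * (ψ b * (ψ a)⁻¹) = -1 := by
    have hCab : C a ≠ C b := C.valid hadj
    by_cases hc : C a = 0
    · have hc2 : ¬ C b = 0 := fun hh => hCab (hc.trans hh.symm)
      rw [hS1ab]
      simp [hS0def, hψdef, hadj, hc, hc2, Complex.inv_I]
    · have hc2 : C b = 0 := hCval hadj hc
      rw [hS1ab]
      simp [hS0def, hψdef, hadj, hc, hc2]
  rw [hprod1] at hsplit
  rw [hfinal] at hsplit
  norm_num at hsplit
end

section
/- Let G be a connected bipartite graph with adjacency matrix A = [[O, B],[Bᵀ, O]] (blocks according to the bipartition). Then the skew-adjacency matrix S̄ = [[O, B],[−Bᵀ, O]] satisfies ρ(S̄) = ρ(A); that is, the maximum skew spectral radius of G equals the adjacency spectral radius of G, attained by orienting all edges from one side of the bipartition to the other. -/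
open Polynomial Matrix
set_option linter.unusedSectionVars false
set_option maxHeartbeats 1000000

variable {V : Type*} [Fintype V] [DecidableEq V]

/-- The bipartite graph on `Fin a ⊕ Fin b` whose edges are the support of `B`. -/
def bipartiteGraph {a b : ℕ} (B : Matrix (Fin a) (Fin b) ℝ) : SimpleGraph (Fin a ⊕ Fin b) where
  Adj x y := match x, y with
    | Sum.inl i, Sum.inr j => B i j ≠ 0
    | Sum.inr j, Sum.inl i => B i j ≠ 0
    | _, _ => False
  symm := ⟨by rintro (i | i) (j | j) h <;> simp_all⟩
  loopless := ⟨by rintro (i | i) h <;> simp_all⟩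


/-! ### Auxiliary lemmas -/

section Helpers

lemma isRoot_charpoly_iff' (M : Matrix V V ℂ) (z : ℂ) :
    M.charpoly.IsRoot z ↔ (z • (1 : Matrix V V ℂ) - M).det = 0 := by
  have h : (charmatrix M).map (Polynomial.evalRingHom z) = z • (1 : Matrix V V ℂ) - M := by
    ext i j
    by_cases h : i = j <;>
      simp [h, charmatrix_apply, Matrix.one_apply, Matrix.diagonal_apply, Matrix.smul_apply]
  rw [Matrix.charpoly, Polynomial.IsRoot, ← coe_evalRingHom, RingHom.map_det,
    RingHom.mapMatrix_apply, h]

lemma mem_spectrum_iff_isRoot' (M : Matrix V V ℂ) (z : ℂ) :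
    z ∈ spectrum ℂ M ↔ M.charpoly.IsRoot z := by
  rw [spectrum.mem_iff, isRoot_charpoly_iff', Matrix.isUnit_iff_isUnit_det, isUnit_iff_ne_zero,
    not_ne_iff]
  congr! 2
  rw [Algebra.algebraMap_eq_smul_one]

lemma specRadSet_eq' (M : Matrix V V ℂ) :
    {r : ℝ | ∃ z : ℂ, M.charpoly.IsRoot z ∧ r = ‖z‖} =
      (‖·‖) '' {z | M.charpoly.IsRoot z} := by
  ext r; simp [Set.mem_image, eq_comm]

lemma bddAbove_specRadSet' (M : Matrix V V ℂ) :
    BddAbove {r : ℝ | ∃ z : ℂ, M.charpoly.IsRoot z ∧ r = ‖z‖} := by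
  rw [specRadSet_eq']
  exact ((Polynomial.finite_setOf_isRoot M.charpoly_monic.ne_zero).image _).bddAbove

lemma specRadSet_nonempty' [Nonempty V] (M : Matrix V V ℂ) :
    {r : ℝ | ∃ z : ℂ, M.charpoly.IsRoot z ∧ r = ‖z‖}.Nonempty := by
  obtain ⟨z, hz⟩ := IsAlgClosed.exists_root M.charpoly (by
    rw [Matrix.charpoly_degree_eq_dim]
    simp [Fintype.card_ne_zero])
  exact ⟨‖z‖, z, hz, rfl⟩

lemma abs_le_specRad' {M : Matrix V V ℂ} {z : ℂ} (hz : M.charpoly.IsRoot z) :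
    ‖z‖ ≤ specRad M :=
  le_csSup (bddAbove_specRadSet' M) ⟨z, hz, rfl⟩

lemma specRad_nonneg' [Nonempty V] (M : Matrix V V ℂ) : 0 ≤ specRad M := by
  obtain ⟨r, z, hz, rfl⟩ := specRadSet_nonempty' M
  exact le_trans (norm_nonneg z) (abs_le_specRad' hz)

open scoped Matrix.Norms.L2Operator

lemma specRad_le_norm' [Nonempty V] (M : Matrix V V ℂ) : specRad M ≤ ‖M‖ := by
  letI : NormOneClass (Matrix V V ℂ) := ⟨by
    rw [Matrix.cstar_norm_def, _root_.map_one]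
    exact ContinuousLinearMap.norm_id⟩
  refine csSup_le (specRadSet_nonempty' M) ?_
  rintro r ⟨z, hz, rfl⟩
  simpa using
    spectrum.norm_le_norm_of_mem ((mem_spectrum_iff_isRoot' M z).2 hz)

lemma norm_le_specRad_of_selfAdjoint' [Nonempty V] {M : Matrix V V ℂ}
    (hM : IsSelfAdjoint M) : ‖M‖ ≤ specRad M := by
  letI : CStarAlgebra (Matrix V V ℂ) := Matrix.instCStarAlgebra
  have h1 : spectralRadius ℂ M = ‖M‖₊ := hM.spectralRadius_eq_nnnorm
  have h2 : spectralRadius ℂ M ≤ ENNReal.ofReal (specRad M) := by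
    refine iSup₂_le fun z hz => ?_
    have : ‖z‖ ≤ specRad M := by
      simpa using abs_le_specRad' ((mem_spectrum_iff_isRoot' M z).1 hz)
    rw [← ENNReal.ofReal_coe_nnreal, coe_nnnorm]
    exact ENNReal.ofReal_le_ofReal this
  rw [h1] at h2
  have := (ENNReal.le_ofReal_iff_toReal_le (by simp) (specRad_nonneg' M)).1 h2
  simpa using this

lemma euclidean_norm_symm' (u : V → ℂ) :
    ‖(WithLp.equiv 2 (V → ℂ)).symm u‖ = Real.sqrt (∑ i, ‖u i‖ ^ 2) := by
  rw [EuclideanSpace.norm_eq]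
  simp

lemma l2_opNorm_le_of_abs_le' {S : Matrix V V ℂ} {R : Matrix V V ℝ}
    (hR : ∀ i j, 0 ≤ R i j) (h : ∀ i j, ‖S i j‖ ≤ R i j) :
    ‖S‖ ≤ ‖R.map Complex.ofReal‖ := by
  rw [Matrix.l2_opNorm_def]
  refine ContinuousLinearMap.opNorm_le_bound _ (norm_nonneg _) fun x => ?_
  set x' : V → ℂ := WithLp.equiv 2 (V → ℂ) x with hx'
  set ax : V → ℂ := fun j => (‖x' j‖ : ℂ) with hax
  set y : EuclideanSpace ℂ V := (WithLp.equiv 2 (V → ℂ)).symm ax with hy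
  have hyx : ‖y‖ = ‖x‖ := by
    rw [hy, euclidean_norm_symm', EuclideanSpace.norm_eq]
    congr 1
    refine Finset.sum_congr rfl fun j _ => ?_
    simp [hax, hx']
  have key : ∀ i, ‖(S *ᵥ x') i‖ ≤ ‖((R.map Complex.ofReal) *ᵥ ax) i‖ := by
    intro i
    have h1 : ((R.map Complex.ofReal) *ᵥ ax) i =
        ((∑ j, R i j * ‖x' j‖ : ℝ) : ℂ) := by
      simp [Matrix.mulVec, dotProduct, hax]
    have h2 : (0 : ℝ) ≤ ∑ j, R i j * ‖x' j‖ :=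
      Finset.sum_nonneg fun j _ => mul_nonneg (hR i j) (norm_nonneg _)
    rw [h1, Complex.norm_real, Real.norm_of_nonneg h2]
    calc ‖(S *ᵥ x') i‖ = ‖∑ j, S i j * x' j‖ := by rfl
      _ ≤ ∑ j, ‖S i j * x' j‖ := norm_sum_le _ _
      _ ≤ ∑ j, R i j * ‖x' j‖ := by
          refine Finset.sum_le_sum fun j _ => ?_
          rw [norm_mul]
          exact mul_le_mul_of_nonneg_right (h i j) (norm_nonneg _)
  have step1 : ‖(toEuclideanLin (𝕜 := ℂ) (m := V) (n := V)).trans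
      LinearMap.toContinuousLinearMap S x‖ ≤
      ‖(WithLp.equiv 2 (V → ℂ)).symm ((R.map Complex.ofReal) *ᵥ ax)‖ := by
    have heq : (toEuclideanLin (𝕜 := ℂ) (m := V) (n := V)).trans
        LinearMap.toContinuousLinearMap S x = (WithLp.equiv 2 (V → ℂ)).symm (S *ᵥ x') := rfl
    rw [heq, euclidean_norm_symm', euclidean_norm_symm']
    apply Real.sqrt_le_sqrt
    exact Finset.sum_le_sum fun i _ => pow_le_pow_left₀ (norm_nonneg _) (key i) 2
  refine le_trans step1 ?_
  have step2 : ‖(WithLp.equiv 2 (V → ℂ)).symm ((R.map Complex.ofReal) *ᵥ ax)‖ ≤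
      ‖R.map Complex.ofReal‖ * ‖y‖ := by
    have := Matrix.l2_opNorm_mulVec (R.map Complex.ofReal) y
    exact this
  rw [hyx] at step2
  exact step2

lemma roots_skew' {a b : ℕ} (B' : Matrix (Fin a) (Fin b) ℂ) (z : ℂ) :
    (fromBlocks 0 B' (-B'ᵀ) 0).charpoly.IsRoot z ↔
      (fromBlocks 0 B' B'ᵀ 0).charpoly.IsRoot (-Complex.I * z) := by
  rw [isRoot_charpoly_iff', isRoot_charpoly_iff']
  set d : Fin a ⊕ Fin b → ℂ := Sum.elim (fun _ => 1) (fun _ => Complex.I) with hd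
  set e : Fin a ⊕ Fin b → ℂ := Sum.elim (fun _ => 1) (fun _ => -Complex.I) with he
  have key : z • (1 : Matrix (Fin a ⊕ Fin b) (Fin a ⊕ Fin b) ℂ) - fromBlocks 0 B' (-B'ᵀ) 0 =
      diagonal d * (Complex.I • ((-Complex.I * z) • 1 - fromBlocks 0 B' B'ᵀ 0)) * diagonal e := by
    ext i j
    rw [Matrix.mul_diagonal, Matrix.diagonal_mul]
    rcases i with i | i <;> rcases j with j | j
    · by_cases h : i = j <;>
        simp [hd, he, h, Matrix.one_apply, Matrix.smul_apply, Matrix.sub_apply, smul_eq_mul] <;>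
        linear_combination z * Complex.I_sq
    · simp [hd, he, Matrix.one_apply, Matrix.smul_apply, Matrix.sub_apply, smul_eq_mul]
      linear_combination (-(B' i j)) * Complex.I_sq
    · simp [hd, he, Matrix.one_apply, Matrix.smul_apply, Matrix.sub_apply, smul_eq_mul]
      linear_combination (B' j i) * Complex.I_sq
    · by_cases h : i = j <;>
        simp [hd, he, h, Matrix.one_apply, Matrix.smul_apply, Matrix.sub_apply, smul_eq_mul] <;>
        linear_combination (z - z * Complex.I ^ 2) * Complex.I_sq
  have hde : (∏ i, d i) * (∏ i, e i) = 1 := by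
    rw [← Finset.prod_mul_distrib]
    refine Finset.prod_eq_one fun i _ => ?_
    rcases i with i | i <;> simp [hd, he]
  have hdet : (z • (1 : Matrix (Fin a ⊕ Fin b) (Fin a ⊕ Fin b) ℂ) - fromBlocks 0 B' (-B'ᵀ) 0).det =
      Complex.I ^ (Fintype.card (Fin a ⊕ Fin b)) *
        ((-Complex.I * z) • (1 : Matrix (Fin a ⊕ Fin b) (Fin a ⊕ Fin b) ℂ)
          - fromBlocks 0 B' B'ᵀ 0).det := by
    rw [key, det_mul, det_mul, det_smul, det_diagonal, det_diagonal, neg_mul]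
    linear_combination (Complex.I ^ Fintype.card (Fin a ⊕ Fin b) *
      ((-(Complex.I * z)) • (1 : Matrix (Fin a ⊕ Fin b) (Fin a ⊕ Fin b) ℂ)
        - fromBlocks 0 B' B'ᵀ 0).det) * hde
  rw [hdet, mul_eq_zero]
  have : Complex.I ^ (Fintype.card (Fin a ⊕ Fin b)) ≠ 0 := pow_ne_zero _ Complex.I_ne_zero
  tauto

end Helpers

open scoped Matrix.Norms.L2Operator

/-- For a connected bipartite graph with adjacency matrix `A = [[0,B],[Bᵀ,0]]`, the
skew-adjacency matrix `S̄ = [[0,B],[-Bᵀ,0]]` satisfies `ρ(S̄) = ρ(A)`, and this is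
the maximum skew spectral radius of the graph. -/
theorem specRad_skew_block_eq_adjacency {a b : ℕ} (B : Matrix (Fin a) (Fin b) ℝ)
    (hB : ∀ i j, B i j = 0 ∨ B i j = 1)
    (hconn : (bipartiteGraph B).Connected) :
    specRad ((Matrix.fromBlocks 0 B (-Bᵀ) 0).map Complex.ofReal) =
      specRad ((Matrix.fromBlocks 0 B Bᵀ 0).map Complex.ofReal) ∧
    IsSkewAdj (bipartiteGraph B) (Matrix.fromBlocks 0 B (-Bᵀ) 0) ∧
    maxSkewSpecRad (bipartiteGraph B) =
      specRad ((Matrix.fromBlocks 0 B Bᵀ 0).map Complex.ofReal) := by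
  classical
  have hNe : Nonempty (Fin a ⊕ Fin b) := hconn.nonempty
  set B' : Matrix (Fin a) (Fin b) ℂ := B.map Complex.ofReal with hB'
  have hmapS : (Matrix.fromBlocks 0 B (-Bᵀ) 0).map Complex.ofReal =
      fromBlocks 0 B' (-B'ᵀ) 0 := by
    ext (i | i) (j | j) <;> simp [hB', Matrix.map_apply]
  have hmapA : (Matrix.fromBlocks 0 B Bᵀ 0).map Complex.ofReal =
      fromBlocks 0 B' B'ᵀ 0 := by
    ext (i | i) (j | j) <;> simp [hB', Matrix.map_apply]
  have part1 : specRad ((Matrix.fromBlocks 0 B (-Bᵀ) 0).map Complex.ofReal) =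
      specRad ((Matrix.fromBlocks 0 B Bᵀ 0).map Complex.ofReal) := by
    unfold specRad
    congr 1
    ext r
    constructor
    · rintro ⟨z, hz, rfl⟩
      rw [hmapS, roots_skew', ← hmapA] at hz
      exact ⟨-Complex.I * z, hz, by simp [_root_.map_mul]⟩
    · rintro ⟨w, hw, rfl⟩
      refine ⟨Complex.I * w, ?_, by simp [_root_.map_mul]⟩
      rw [hmapS, roots_skew', ← hmapA]
      have hw' : -Complex.I * (Complex.I * w) = w := by
        linear_combination (-w) * Complex.I_mul_I
      rwa [hw']
  have part2 : IsSkewAdj (bipartiteGraph B) (Matrix.fromBlocks 0 B (-Bᵀ) 0) := by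
    refine ⟨?_, ?_, ?_⟩
    · rintro (i | i) (j | j) <;> simp [Matrix.fromBlocks]
    · rintro (i | i) (j | j) h
      · simp [bipartiteGraph] at h
      · rcases hB i j with h0 | h0 <;> simp_all [bipartiteGraph, Matrix.fromBlocks]
      · rcases hB j i with h0 | h0 <;> simp_all [bipartiteGraph, Matrix.fromBlocks]
      · simp [bipartiteGraph] at h
    · rintro (i | i) (j | j) h
      · simp [Matrix.fromBlocks]
      · simp [bipartiteGraph] at h; simp [Matrix.fromBlocks, h]
      · simp [bipartiteGraph] at h; simp [Matrix.fromBlocks, h]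
      · simp [Matrix.fromBlocks]
  have hselfadj : IsSelfAdjoint ((Matrix.fromBlocks 0 B Bᵀ 0).map Complex.ofReal) := by
    rw [_root_.isSelfAdjoint_iff, Matrix.star_eq_conjTranspose]
    ext (i | i) (j | j) <;>
      simp [Matrix.conjTranspose_apply, Matrix.map_apply, Matrix.fromBlocks, Complex.conj_ofReal]
  have hApos : ∀ i j, 0 ≤ Matrix.fromBlocks 0 B Bᵀ (0 : Matrix (Fin b) (Fin b) ℝ) i j := by
    rintro (i | i) (j | j)
    · simp [Matrix.fromBlocks]
    · rcases hB i j with h0 | h0 <;> simp [Matrix.fromBlocks, h0]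
    · rcases hB j i with h0 | h0 <;> simp [Matrix.fromBlocks, h0]
    · simp [Matrix.fromBlocks]
  have hub : ∀ r ∈ {r : ℝ | ∃ S : Matrix (Fin a ⊕ Fin b) (Fin a ⊕ Fin b) ℝ,
        IsSkewAdj (bipartiteGraph B) S ∧ r = specRad (S.map Complex.ofReal)},
      r ≤ specRad ((Matrix.fromBlocks 0 B Bᵀ 0).map Complex.ofReal) := by
    rintro r ⟨S, hS, rfl⟩
    have h1 : specRad (S.map Complex.ofReal) ≤ ‖S.map Complex.ofReal‖ := specRad_le_norm' _
    have h2 : ‖S.map Complex.ofReal‖ ≤ ‖(Matrix.fromBlocks 0 B Bᵀ 0).map Complex.ofReal‖ := by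
      apply l2_opNorm_le_of_abs_le'
      · exact hApos
      · intro i j
        by_cases hadj : (bipartiteGraph B).Adj i j
        · have hA1 : Matrix.fromBlocks 0 B Bᵀ (0 : Matrix (Fin b) (Fin b) ℝ) i j = 1 := by
            rcases i with i | i <;> rcases j with j | j
            · simp [bipartiteGraph] at hadj
            · simp [bipartiteGraph] at hadj
              rcases hB i j with h0 | h0 <;> simp_all [Matrix.fromBlocks]
            · simp [bipartiteGraph] at hadj
              rcases hB j i with h0 | h0 <;> simp_all [Matrix.fromBlocks]
            · simp [bipartiteGraph] at hadj
          rcases hS.2.1 i j hadj with h0 | h0 <;> rw [Matrix.map_apply, h0, hA1] <;> simp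
        · rw [Matrix.map_apply, hS.2.2 i j hadj]
          simpa using hApos i j
    have h3 : ‖(Matrix.fromBlocks 0 B Bᵀ 0).map Complex.ofReal‖ ≤
        specRad ((Matrix.fromBlocks 0 B Bᵀ 0).map Complex.ofReal) :=
      norm_le_specRad_of_selfAdjoint' hselfadj
    linarith
  have hmem : specRad ((Matrix.fromBlocks 0 B Bᵀ 0).map Complex.ofReal) ∈
      {r : ℝ | ∃ S : Matrix (Fin a ⊕ Fin b) (Fin a ⊕ Fin b) ℝ,
        IsSkewAdj (bipartiteGraph B) S ∧ r = specRad (S.map Complex.ofReal)} :=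
    ⟨Matrix.fromBlocks 0 B (-Bᵀ) 0, part2, part1.symm⟩
  exact ⟨part1, part2, IsGreatest.csSup_eq ⟨hmem, hub⟩⟩
end

section
/- If T is a tree, then every skew-adjacency matrix S of T (for any orientation) is similar via a {−1,1}-diagonal matrix conjugation combined with multiplication by i to a Hermitian matrix with the same spectral radius as the adjacency matrix of T; in particular, ρ(S) = ρ(A(T)) for every orientation of T, where A(T) is the adjacency matrix of T. -/
noncomputable def wprodAux {n : ℕ} (S : Matrix (Fin n) (Fin n) ℝ) {G : SimpleGraph (Fin n)} :
    {u v : Fin n} → G.Walk u v → ℂ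
  | _, _, SimpleGraph.Walk.nil => 1
  | _, _, @SimpleGraph.Walk.cons _ _ a b _ _ p => Complex.I * (S a b : ℂ) * wprodAux S p

lemma wprodAux_nil {n : ℕ} (S : Matrix (Fin n) (Fin n) ℝ) {G : SimpleGraph (Fin n)} {u : Fin n} :
    wprodAux S (SimpleGraph.Walk.nil : G.Walk u u) = 1 := rfl

lemma wprodAux_cons {n : ℕ} (S : Matrix (Fin n) (Fin n) ℝ) {G : SimpleGraph (Fin n)}
    {a b c : Fin n} (h : G.Adj a b) (p : G.Walk b c) :
    wprodAux S (SimpleGraph.Walk.cons h p) = Complex.I * (S a b : ℂ) * wprodAux S p := rfl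

lemma wprodAux_append {n : ℕ} (S : Matrix (Fin n) (Fin n) ℝ) {G : SimpleGraph (Fin n)}
    {a b c : Fin n} (p : G.Walk a b) (q : G.Walk b c) :
    wprodAux S (p.append q) = wprodAux S p * wprodAux S q := by
  induction p with
  | nil => simp [wprodAux_nil]
  | cons h p ih => simp [SimpleGraph.Walk.cons_append, wprodAux_cons, ih, mul_assoc]

lemma wprodAux_ne_zero {n : ℕ} (S : Matrix (Fin n) (Fin n) ℝ) {G : SimpleGraph (Fin n)}
    (hedge : ∀ i j, G.Adj i j → S i j = 1 ∨ S i j = -1)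
    {u v : Fin n} (p : G.Walk u v) : wprodAux S p ≠ 0 := by
  induction p with
  | nil => simp [wprodAux_nil]
  | cons h p ih =>
    rw [wprodAux_cons]
    refine mul_ne_zero (mul_ne_zero Complex.I_ne_zero ?_) ih
    rcases hedge _ _ h with h1 | h1 <;> simp [h1]

lemma eval_charpoly' {n : ℕ} (M : Matrix (Fin n) (Fin n) ℂ) (z : ℂ) :
    M.charpoly.eval z = ((z • (1 : Matrix (Fin n) (Fin n) ℂ)) - M).det := by
  rw [Matrix.charpoly, ← Polynomial.coe_evalRingHom, RingHom.map_det]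
  congr 1
  ext i j
  by_cases h : i = j <;>
    simp [Matrix.charmatrix_apply, h, Matrix.one_apply, Matrix.diagonal_apply]



open Polynomial Matrix

variable {V : Type*} [Fintype V] [DecidableEq V]

/-- Every skew-adjacency matrix `S` of a tree `T` becomes, after multiplying by `i`
and conjugating by a `{-1,1}`-diagonal matrix, a Hermitian matrix with the same
spectral radius as the adjacency matrix of `T`; in particular `ρ(S) = ρ(A(T))`. -/
theorem tree_skewAdj_specRad_eq_adj {n : ℕ} (G : SimpleGraph (Fin n))
    [DecidableRel G.Adj] (hT : G.IsTree)
    (S : Matrix (Fin n) (Fin n) ℝ) (hS : IsSkewAdj G S) :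
    ∃ D : Fin n → ℂ, (∀ x, D x = 1 ∨ D x = -1) ∧
      (Matrix.diagonal D * (Complex.I • S.map Complex.ofReal) *
        (Matrix.diagonal D)⁻¹).IsHermitian ∧
      specRad (Matrix.diagonal D * (Complex.I • S.map Complex.ofReal) *
        (Matrix.diagonal D)⁻¹) = specRad ((G.adjMatrix ℝ).map Complex.ofReal) ∧
      specRad (S.map Complex.ofReal) = specRad ((G.adjMatrix ℝ).map Complex.ofReal) := by
  obtain ⟨hskew, hedge, hnon⟩ := hS

  have hne : Nonempty (Fin n) := hT.isConnected.nonempty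
  set M : Matrix (Fin n) (Fin n) ℂ := Complex.I • S.map Complex.ofReal with hM
  set A : Matrix (Fin n) (Fin n) ℂ := (G.adjMatrix ℝ).map Complex.ofReal with hA
  obtain ⟨r⟩ := hne
  have hex : ∀ v, ∃ p : G.Walk r v, p.IsPath := fun v => (hT.existsUnique_path r v).exists
  set P : ∀ v, G.Walk r v := fun v => (hex v).choose with hPdef
  have hP : ∀ v, (P v).IsPath := fun v => (hex v).choose_spec
  have huniq : ∀ (v : Fin n) (q : G.Walk r v), q.IsPath → q = P v := fun v q hq =>
    (hT.existsUnique_path r v).unique hq (hP v)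
  set U : Fin n → ℂ := fun v => wprodAux S (P v) with hU
  have hU0 : ∀ v, U v ≠ 0 := fun v => wprodAux_ne_zero S hedge (P v)
  have hfac : ∀ u v, G.Adj u v →
      (Complex.I * (S v u : ℂ)) * (Complex.I * (S u v : ℂ)) = 1 := by
    intro u v h
    rcases hedge u v h with h1 | h1 <;>
      · rw [hskew u v, h1]; push_cast; ring_nf; simp [Complex.I_sq]
  have key : ∀ u v, G.Adj u v → U v = U u * (Complex.I * (S u v : ℂ)) := by
    intro u v huv
    by_cases hv : v ∈ (P u).support
    · have htake : (P u).takeUntil v hv = P v := huniq v _ ((hP u).takeUntil hv)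
      have hdrop : (P u).dropUntil v hv
          = SimpleGraph.Walk.cons huv.symm SimpleGraph.Walk.nil := by
        refine (hT.existsUnique_path v u).unique ((hP u).dropUntil hv) ?_
        rw [SimpleGraph.Walk.cons_isPath_iff]
        exact ⟨SimpleGraph.Walk.IsPath.nil, by simpa using G.ne_of_adj huv.symm⟩
      have hu : U u = U v * (Complex.I * (S v u : ℂ)) := by
        calc U u = wprodAux S (((P u).takeUntil v hv).append ((P u).dropUntil v hv)) := by
              rw [(P u).take_spec hv]
          _ = U v * (Complex.I * (S v u : ℂ)) := by
              rw [wprodAux_append, htake, hdrop, wprodAux_cons, wprodAux_nil]; ring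
      rw [hu, mul_assoc, hfac u v huv, mul_one]
    · have hpath : ((P u).concat huv).IsPath := by
        rw [← SimpleGraph.Walk.isPath_reverse_iff, SimpleGraph.Walk.reverse_concat,
          SimpleGraph.Walk.cons_isPath_iff]
        refine ⟨(SimpleGraph.Walk.isPath_reverse_iff _).2 (hP u), ?_⟩
        rwa [SimpleGraph.Walk.support_reverse, List.mem_reverse]
      have hc : (P u).concat huv = P v := huniq v _ hpath
      calc U v = wprodAux S ((P u).concat huv) := by rw [hc]
        _ = U u * (Complex.I * (S u v : ℂ)) := by
            rw [SimpleGraph.Walk.concat_eq_append, wprodAux_append, wprodAux_cons,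
              wprodAux_nil]; ring
  have hDM : Matrix.diagonal U * M = A * Matrix.diagonal U := by
    ext i j
    rw [Matrix.diagonal_mul, Matrix.mul_diagonal]
    by_cases h : G.Adj i j
    · simp only [hM, hA, Matrix.smul_apply, Matrix.map_apply, SimpleGraph.adjMatrix_apply,
        h, if_true, smul_eq_mul]
      rw [← key i j h]; simp
    · simp [hM, hA, Matrix.smul_apply, Matrix.map_apply, h, hnon i j h]
  have detD : (Matrix.diagonal U).det ≠ 0 := by
    rw [Matrix.det_diagonal]
    exact Finset.prod_ne_zero_iff.2 fun v _ => hU0 v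
  have hdet : ∀ z : ℂ, (z • (1 : Matrix (Fin n) (Fin n) ℂ) - M).det
      = (z • (1 : Matrix (Fin n) (Fin n) ℂ) - A).det := by
    intro z
    have h1 : Matrix.diagonal U * (z • 1 - M) = (z • 1 - A) * Matrix.diagonal U := by
      rw [Matrix.mul_sub, Matrix.sub_mul, hDM, Matrix.mul_smul, Matrix.smul_mul,
        Matrix.mul_one, Matrix.one_mul]
    have h2 := congrArg Matrix.det h1
    rw [Matrix.det_mul, Matrix.det_mul, mul_comm ((z • 1 - A).det)] at h2
    exact mul_left_cancel₀ detD h2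
  have hroots : ∀ z : ℂ, (M.charpoly.IsRoot z ↔ A.charpoly.IsRoot z) := by
    intro z
    simp only [Polynomial.IsRoot, eval_charpoly', hdet z]
  have hMA : specRad M = specRad A := by
    unfold specRad
    congr 1
    ext t
    constructor
    · rintro ⟨z, hz, rfl⟩; exact ⟨z, (hroots z).1 hz, rfl⟩
    · rintro ⟨z, hz, rfl⟩; exact ⟨z, (hroots z).2 hz, rfl⟩
  have hSM : specRad (S.map Complex.ofReal) = specRad M := by
    unfold specRad
    congr 1
    ext t
    constructor
    · rintro ⟨z, hz, rfl⟩
      refine ⟨Complex.I * z, ?_, by simp⟩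
      rw [Polynomial.IsRoot, eval_charpoly'] at hz ⊢
      have he : (Complex.I * z) • (1 : Matrix (Fin n) (Fin n) ℂ) - M
          = Complex.I • (z • (1 : Matrix (Fin n) (Fin n) ℂ) - S.map Complex.ofReal) := by
        rw [hM, smul_sub, smul_smul]
      rw [he, Matrix.det_smul, hz, mul_zero]
    · rintro ⟨z, hz, rfl⟩
      refine ⟨-Complex.I * z, ?_, by simp⟩
      rw [Polynomial.IsRoot, eval_charpoly'] at hz ⊢
      have he : z • (1 : Matrix (Fin n) (Fin n) ℂ) - M
          = Complex.I • ((-Complex.I * z) • (1 : Matrix (Fin n) (Fin n) ℂ)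
            - S.map Complex.ofReal) := by
        rw [hM, smul_sub, smul_smul]
        congr 2
        simp [← mul_assoc, Complex.I_mul_I]
      rw [he, Matrix.det_smul] at hz
      exact (mul_eq_zero.1 hz).resolve_left (pow_ne_zero _ Complex.I_ne_zero)
  have herm : M.IsHermitian := by
    ext i j
    simp only [hM, Matrix.conjTranspose_apply, Matrix.smul_apply, Matrix.map_apply,
      smul_eq_mul, star_mul', Complex.star_def, Complex.conj_I, Complex.conj_ofReal,
      hskew i j]
    push_cast
    ring
  refine ⟨fun _ => 1, fun _ => Or.inl rfl, ?_⟩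
  rw [Matrix.diagonal_one, inv_one, Matrix.one_mul, Matrix.mul_one]
  exact ⟨herm, hMA, hSM.trans hMA⟩
end
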